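/- arXiv:2012.02231 — 3 statements merged into one kernel-verified Lean document; each statement's English description precedes it below -/
import Mathlib

section
/- Every rooted binary orchard network is recoverable; that is, if N is an orchard network on X, then the lowest stable ancestor of X equals the root, equivalently N has no arc (u, v) whose deletion disconnects N such that v is an ancestor of every leaf in X. -/
open scoped Classical

/-- A directed graph with a finite vertex set and a multiset of arcs
(so that parallel arcs can be represented). -/
structure Digraph' (α : Type*) where
  V : Finset α
  E : Multiset (α × α)

namespace Digraph'

variable {α : Type*} [DecidableEq α]

/-- In-degree of a vertex. -/
noncomputable def inDeg (G : Digraph' α) (v : α) : ℕ :=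
  (G.E.filter (fun e => e.2 = v)).card

/-- Out-degree of a vertex. -/
noncomputable def outDeg (G : Digraph' α) (v : α) : ℕ :=
  (G.E.filter (fun e => e.1 = v)).card

/-- A (directed) path, given as its nonempty list of vertices. -/
def IsPath (G : Digraph' α) (p : List α) : Prop :=
  p ≠ [] ∧ (∀ v ∈ p, v ∈ G.V) ∧ p.Chain' (fun u v => (u, v) ∈ G.E)

/-- A directed path from `u` to `v`. -/
def PathFrom (G : Digraph' α) (u v : α) (p : List α) : Prop :=
  G.IsPath p ∧ p.head? = some u ∧ p.getLast? = some v

/-- There is a directed path from `u` to `v` (possibly trivial). -/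
def Reaches (G : Digraph' α) (u v : α) : Prop := ∃ p, G.PathFrom u v p

/-- Acyclicity: no arc whose head reaches its tail. -/
def Acyclic (G : Digraph' α) : Prop := ∀ e ∈ G.E, ¬ G.Reaches e.2 e.1

/-- `u` is a stable ancestor of `X'` (w.r.t. root `ρ`): every path from
`ρ` to each `x ∈ X'` traverses `u`. -/
def StableAncestor (G : Digraph' α) (ρ : α) (X' : Finset α) (u : α) : Prop :=
  ∀ x ∈ X', ∀ p, G.PathFrom ρ x p → u ∈ p

/-- `u` is a lowest stable ancestor of `X'`: it is a stable ancestor and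
no distinct stable ancestor of `X'` is a descendant of `u`. -/
def IsLowestSA (G : Digraph' α) (ρ : α) (X' : Finset α) (u : α) : Prop :=
  G.StableAncestor ρ X' u ∧
    ∀ v, G.StableAncestor ρ X' v → v ≠ u → ¬ G.Reaches u v

/-- Delete a vertex together with all incident arcs. -/
noncomputable def deleteVertex (G : Digraph' α) (w : α) : Digraph' α :=
  ⟨G.V.erase w, G.E.filter (fun e => e.1 ≠ w ∧ e.2 ≠ w)⟩

/-- `G'` is obtained from `G` by suppressing the in-degree-one
out-degree-one vertex `w` (replacing `(p,w)`, `(w,c)` by the arc `(p,c)`). -/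
def Suppress (G : Digraph' α) (w : α) (G' : Digraph' α) : Prop :=
  G.inDeg w = 1 ∧ G.outDeg w = 1 ∧
  ∃ p c, (p, w) ∈ G.E ∧ (w, c) ∈ G.E ∧
    G'.V = G.V.erase w ∧ G'.E = (G.deleteVertex w).E + {(p, c)}

/-- `G'` is obtained from `G` by deleting exactly one arc of a pair of
parallel arcs. -/
def DeleteParallel (G G' : Digraph' α) : Prop :=
  ∃ e : α × α, 2 ≤ G.E.count e ∧ G'.V = G.V ∧ G'.E = G.E.erase e

/-- One simplification step: suppress a degree-(1,1) vertex or delete a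
parallel arc. -/
def SimpStep (G G' : Digraph' α) : Prop :=
  (∃ w, G.Suppress w G') ∨ G.DeleteParallel G'

/-- `G'` is the full simplification of `G`. -/
def FullSimp (G G' : Digraph' α) : Prop :=
  Relation.ReflTransGen (SimpStep (α := α)) G G' ∧ ∀ G'', ¬ SimpStep G' G''

/-- The path graph of `G` on `A` (w.r.t. the vertex `r`): all vertices and
arcs lying on a directed path from `r` to a leaf in `A`. -/
noncomputable def pathGraph (G : Digraph' α) (r : α) (A : Finset α) : Digraph' α :=
  ⟨G.V.filter (fun v => ∃ x ∈ A, ∃ p, G.PathFrom r x p ∧ v ∈ p),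
   G.E.filter (fun e => ∃ x ∈ A, ∃ p, G.PathFrom r x p ∧ e ∈ p.zip p.tail)⟩

/-- Isomorphism of digraphs fixing every element of `A`. -/
def IsoOn (G1 G2 : Digraph' α) (A : Finset α) : Prop :=
  ∃ φ : α → α, Set.BijOn φ ↑G1.V ↑G2.V ∧ (∀ x ∈ A, φ x = x) ∧
    G2.E = G1.E.map (fun e => (φ e.1, φ e.2))

end Digraph'

/-- A rooted binary phylogenetic network on the leaf set `X`. -/
structure PhyloNet (α : Type*) where
  G : Digraph' α
  root : α
  X : Finset α
  root_mem : root ∈ G.V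
  wf : ∀ e ∈ G.E, e.1 ∈ G.V ∧ e.2 ∈ G.V
  noParallel : ∀ e : α × α, G.E.count e ≤ 1
  acyclic : G.Acyclic
  reach : ∀ v ∈ G.V, G.Reaches root v
  binary :
    (G.V = {root} ∧ G.E = 0 ∧ X = {root}) ∨
    (G.inDeg root = 0 ∧ G.outDeg root = 2 ∧
     (∀ x ∈ X, x ∈ G.V ∧ G.inDeg x = 1 ∧ G.outDeg x = 0) ∧
     (∀ v ∈ G.V, G.outDeg v = 0 → v ∈ X) ∧
     (∀ v ∈ G.V, v ≠ root → v ∉ X →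
       (G.inDeg v = 1 ∧ G.outDeg v = 2) ∨ (G.inDeg v = 2 ∧ G.outDeg v = 1)))

namespace PhyloNet

variable {α : Type*} [DecidableEq α]

/-- `N` is recoverable: the root is the only stable ancestor of `X`. -/
def Recoverable (N : PhyloNet α) : Prop :=
  ∀ v, N.G.StableAncestor N.root N.X v → v = N.root

/-- `{a, b}` is a cherry: two distinct leaves with a common parent. -/
def Cherry (N : PhyloNet α) (a b : α) : Prop :=
  a ∈ N.X ∧ b ∈ N.X ∧ a ≠ b ∧ ∃ p, (p, a) ∈ N.G.E ∧ (p, b) ∈ N.G.E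

/-- `(a, b)` is a reticulated cherry: leaves `a, b` whose parents `p_a, p_b`
satisfy that `(p_a, p_b)` is an arc and `p_b` is a reticulation. -/
def RetCherry (N : PhyloNet α) (a b : α) : Prop :=
  a ∈ N.X ∧ b ∈ N.X ∧ a ≠ b ∧
  ∃ pa pb, (pa, a) ∈ N.G.E ∧ (pb, b) ∈ N.G.E ∧ (pa, pb) ∈ N.G.E ∧
    N.G.inDeg pb = 2

/-- `N'` is obtained from `N` by reducing the leaf `b` of the cherry `{a, b}`:
delete `b` and its incident arc and suppress the resulting degree-two
vertex (or, if the common parent is the root, replace `N` by the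
single-vertex network on `a`). -/
def ReduceCherry (N : PhyloNet α) (a b : α) (N' : PhyloNet α) : Prop :=
  N.Cherry a b ∧ N'.X = N.X.erase b ∧
  ∃ p, (p, a) ∈ N.G.E ∧ (p, b) ∈ N.G.E ∧
    ((p = N.root ∧ N'.G.V = {a} ∧ N'.G.E = 0 ∧ N'.root = a) ∨
     (p ≠ N.root ∧ N'.root = N.root ∧ (N.G.deleteVertex b).Suppress p N'.G))

/-- `N'` is obtained from `N` by cutting the reticulated cherry `(a, b)`:
delete the reticulation arc `(p_a, p_b)` and suppress the two resulting
degree-two vertices. -/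
def CutRetCherry (N : PhyloNet α) (a b : α) (N' : PhyloNet α) : Prop :=
  a ∈ N.X ∧ b ∈ N.X ∧ a ≠ b ∧ N'.X = N.X ∧ N'.root = N.root ∧
  ∃ pa pb, (pa, a) ∈ N.G.E ∧ (pb, b) ∈ N.G.E ∧ (pa, pb) ∈ N.G.E ∧
    N.G.inDeg pb = 2 ∧
    ∃ G1 : Digraph' α, G1.V = N.G.V ∧ G1.E = N.G.E.erase (pa, pb) ∧
      ∃ G2 : Digraph' α, G1.Suppress pa G2 ∧ G2.Suppress pb N'.G

/-- One cherry-picking step: reduce a leaf of a cherry or cut a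
reticulated cherry. -/
def PickStep (N N' : PhyloNet α) : Prop :=
  (∃ a b, N.ReduceCherry a b N') ∨ (∃ a b, N.CutRetCherry a b N')

/-- `N` is an orchard network: some sequence of cherry-picking operations
reduces it to a single vertex. -/
def IsOrchard (N : PhyloNet α) : Prop :=
  ∃ M : PhyloNet α, Relation.ReflTransGen (PickStep (α := α)) N M ∧ M.G.V.card = 1

/-- `H` is the network exhibited by `N` on `A`: the full simplification of
the path graph of `N` on `A`, rooted at the lowest stable ancestor of `A`. -/
def Exhibits (N : PhyloNet α) (A : Finset α) (H : Digraph' α) : Prop :=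
  ∃ r, N.G.IsLowestSA N.root A r ∧ Digraph'.FullSimp (N.G.pathGraph r A) H

end PhyloNet


set_option linter.unusedSectionVars false

section ListAux
variable {β : Type*}

lemma myGetLast?_cons_ne (x : β) (m : List β) (h : m ≠ []) : (x :: m).getLast? = m.getLast? := by
  cases m with
  | nil => simp at h
  | cons y t => simp [List.getLast?]

lemma chain'_pred (r : β → β → Prop) {u : β} :
    ∀ (p : List β), p.Chain' r → u ∈ p → p.head? ≠ some u → ∃ w ∈ p, r w u := by
  intro p
  induction p with
  | nil => intro _ h; simp at h
  | cons x t ih =>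
    intro hc hm hh
    have hxu : x ≠ u := by intro h; exact hh (by simp [h])
    have hut : u ∈ t := by rcases List.mem_cons.1 hm with h | h; exact absurd h.symm hxu; exact h
    cases t with
    | nil => simp at hut
    | cons y t' =>
      rcases List.isChain_cons_cons.1 hc with ⟨hxy, hc'⟩
      by_cases hyu : y = u
      · exact ⟨x, by simp, hyu ▸ hxy⟩
      · obtain ⟨w, hw, hr⟩ := ih hc' hut (by simp [hyu])
        exact ⟨w, List.mem_cons_of_mem _ hw, hr⟩

lemma chain'_succ (r : β → β → Prop) {u : β} :
    ∀ (p : List β), p.Chain' r → u ∈ p → p.getLast? ≠ some u → ∃ s ∈ p, r u s := by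
  intro p
  induction p with
  | nil => intro _ h; simp at h
  | cons x t ih =>
    intro hc hm hl
    cases t with
    | nil =>
      simp at hm; exact absurd (by simp [hm]) hl
    | cons y t' =>
      rcases List.isChain_cons_cons.1 hc with ⟨hxy, hc'⟩
      by_cases hxu : x = u
      · exact ⟨y, by simp, hxu ▸ hxy⟩
      · have hut : u ∈ y :: t' := by
          rcases List.mem_cons.1 hm with h | h; exact absurd h.symm hxu; exact h
        have hll : (x :: y :: t').getLast? = (y :: t').getLast? := by simp [List.getLast?]
        obtain ⟨s, hs, hr⟩ := ih hc' hut (by rw [← hll]; exact hl)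
        exact ⟨s, List.mem_cons_of_mem _ hs, hr⟩

lemma mem_two_le_card [DecidableEq β] {s : Multiset β} {a b : β}
    (ha : a ∈ s) (hb : b ∈ s) (hab : a ≠ b) : 2 ≤ Multiset.card s := by
  obtain ⟨t, rfl⟩ : ∃ t, s = a ::ₘ t := ⟨s.erase a, (Multiset.cons_erase ha).symm⟩
  have hb' : b ∈ t := by simpa [Multiset.mem_cons, hab.symm] using hb
  have h1 : 0 < Multiset.card t := Multiset.card_pos_iff_exists_mem.2 ⟨b, hb'⟩
  rw [Multiset.card_cons]; omega

lemma eq_of_card_eq_one {s : Multiset β} {a b : β} (h : Multiset.card s = 1)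
    (ha : a ∈ s) (hb : b ∈ s) : a = b := by
  obtain ⟨c, rfl⟩ := Multiset.card_eq_one.1 h
  simp at ha hb; rw [ha, hb]
end ListAux

section Aux
open Digraph'
variable {α : Type*} [DecidableEq α]

lemma single_path (G : Digraph' α) {u : α} (hu : u ∈ G.V) : G.PathFrom u u [u] :=
  ⟨⟨by simp, by simpa using hu, List.isChain_singleton _⟩, by simp, by simp⟩

lemma two_path (G : Digraph' α) {u v : α} (h : (u, v) ∈ G.E) (h1 : u ∈ G.V) (h2 : v ∈ G.V) :
    G.PathFrom u v [u, v] :=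
  ⟨⟨by simp, by simp [h1, h2], List.isChain_pair.2 h⟩, by simp, by simp [List.getLast?]⟩

lemma reaches_trans {G : Digraph' α} {u v w : α} (h1 : G.Reaches u v) (h2 : G.Reaches v w) :
    G.Reaches u w := by
  obtain ⟨p, ⟨hp0, hpV, hpC⟩, hph, hpl⟩ := h1
  obtain ⟨q, ⟨hq0, hqV, hqC⟩, hqh, hql⟩ := h2
  cases q with
  | nil => simp at hq0
  | cons y t =>
    have hyv : y = v := by simpa using hqh
    refine ⟨p ++ t, ⟨⟨by simp [hp0], ?_, ?_⟩, ?_, ?_⟩⟩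
    · intro z hz; rcases List.mem_append.1 hz with h | h
      · exact hpV z h
      · exact hqV z (List.mem_cons_of_mem _ h)
    · have hvt : (v :: t).Chain' (fun a b => (a, b) ∈ G.E) := hyv ▸ hqC
      rcases List.isChain_cons.1 hvt with ⟨hlink, hct⟩
      refine hpC.append hct ?_
      intro a ha b hb
      have hav : a = v := by
        have := hpl; rw [ha] at this; simpa using this
      exact hav ▸ hlink b hb
    · cases p with
      | nil => simp at hp0
      | cons a p' => simpa using hph
    · cases t with
      | nil =>
        simp only [List.append_nil]
        rw [hpl]
        have : w = v := by simpa [List.getLast?] using (hyv ▸ hql : (v :: ([] : List α)).getLast? = some w).symm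
        simp [this]
      | cons b' t' =>
        rw [List.getLast?_append]
        have h1 : (b' :: t').getLast? = some w := by
          rw [← hql]; exact (myGetLast?_cons_ne y (b' :: t') (by simp)).symm
        simp [h1, Option.or]

lemma no_selfloop {G : Digraph' α} (hacy : G.Acyclic)
    (hwf : ∀ e ∈ G.E, e.1 ∈ G.V ∧ e.2 ∈ G.V) {u : α} (h : (u, u) ∈ G.E) : False :=
  hacy (u, u) h ⟨[u], single_path G (hwf _ h).1⟩

lemma no_two_cycle {G : Digraph' α} (hacy : G.Acyclic)
    (hwf : ∀ e ∈ G.E, e.1 ∈ G.V ∧ e.2 ∈ G.V) {u v : α}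
    (h1 : (u, v) ∈ G.E) (h2 : (v, u) ∈ G.E) : False :=
  hacy (u, v) h1 ⟨[v, u], two_path G h2 (hwf _ h2).1 (hwf _ h2).2⟩

lemma reach_sink {G : Digraph' α} (hacy : G.Acyclic)
    (hwf : ∀ e ∈ G.E, e.1 ∈ G.V ∧ e.2 ∈ G.V) :
    ∀ v ∈ G.V, ∃ x q, G.PathFrom v x q ∧ G.outDeg x = 0 := by
  have key : ∀ n : ℕ, ∀ v ∈ G.V, (G.V.filter (fun y => G.Reaches v y)).card ≤ n →
      ∃ x q, G.PathFrom v x q ∧ G.outDeg x = 0 := by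
    intro n
    induction n with
    | zero =>
      intro v hv hcard
      exfalso
      have : v ∈ G.V.filter (fun y => G.Reaches v y) :=
        Finset.mem_filter.2 ⟨hv, ⟨[v], single_path G hv⟩⟩
      have := Finset.card_pos.2 ⟨v, this⟩; omega
    | succ n ih =>
      intro v hv hcard
      by_cases h0 : G.outDeg v = 0
      · exact ⟨v, [v], single_path G hv, h0⟩
      · have hne : Multiset.filter (fun e => e.1 = v) G.E ≠ 0 := by
          intro h
          exact h0 (by rw [Digraph'.outDeg, Multiset.card_eq_zero]; exact h)
        obtain ⟨e, he⟩ := Multiset.exists_mem_of_ne_zero hne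
        have heE : e ∈ G.E := (Multiset.mem_filter.1 he).1
        have hev : e.1 = v := (Multiset.mem_filter.1 he).2
        set u := e.2 with hu
        have huE : (v, u) ∈ G.E := by
          have : e = (v, u) := by rw [← hev, hu]
          rwa [← this]
        have huV : u ∈ G.V := (hwf _ huE).2
        have hsub : G.V.filter (fun y => G.Reaches u y) ⊆ G.V.filter (fun y => G.Reaches v y) := by
          intro y hy
          rcases Finset.mem_filter.1 hy with ⟨hy1, hy2⟩
          exact Finset.mem_filter.2 ⟨hy1, reaches_trans ⟨[v, u], two_path G huE hv huV⟩ hy2⟩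
        have hvnot : v ∉ G.V.filter (fun y => G.Reaches u y) := by
          intro h
          exact hacy (v, u) huE (Finset.mem_filter.1 h).2
        have hssub : (G.V.filter (fun y => G.Reaches u y)).card <
            (G.V.filter (fun y => G.Reaches v y)).card :=
          Finset.card_lt_card ⟨hsub, fun h =>
            hvnot (h (Finset.mem_filter.2 ⟨hv, ⟨[v], single_path G hv⟩⟩))⟩
        obtain ⟨x, q, hq, hx0⟩ := ih u huV (by omega)
        refine ⟨x, v :: q, ⟨⟨by simp, ?_, ?_⟩, ?_, ?_⟩, hx0⟩
        · intro z hz; rcases List.mem_cons.1 hz with h | h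
          · exact h ▸ hv
          · exact hq.1.2.1 z h
        · refine List.isChain_cons.2 ⟨?_, hq.1.2.2⟩
          intro y hy
          have : y = u := by rw [hq.2.1] at hy; simpa using hy.symm
          exact this ▸ huE
        · simp
        · rw [myGetLast?_cons_ne v q hq.1.1]; exact hq.2.2
  intro v hv
  exact key _ v hv le_rfl

lemma lift_path {G G' : Digraph' α} (S : α → Prop)
    (hwf : ∀ e ∈ G.E, e.1 ∈ G.V ∧ e.2 ∈ G.V)
    (hV : ∀ v ∈ G'.V, v ∈ G.V)
    (hE : ∀ e ∈ G'.E, e ∈ G.E ∨ ∃ y, S y ∧ (e.1, y) ∈ G.E ∧ (y, e.2) ∈ G.E) :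
    ∀ p', G'.IsPath p' → ∃ p, G.IsPath p ∧ p.head? = p'.head? ∧
      p.getLast? = p'.getLast? ∧ ∀ v ∈ p, v ∈ p' ∨ S v := by
  intro p'
  induction p' with
  | nil => intro h; exact absurd rfl h.1
  | cons x t ih =>
    intro hp
    have hxV : x ∈ G.V := hV x (hp.2.1 x (by simp))
    cases t with
    | nil =>
      exact ⟨[x], ⟨by simp, by simpa using hxV, List.isChain_singleton _⟩, rfl, rfl, by simp⟩
    | cons y t' =>
      rcases List.isChain_cons_cons.1 hp.2.2 with ⟨hxy, hcc⟩
      have hp' : G'.IsPath (y :: t') :=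
        ⟨by simp, fun v hv => hp.2.1 v (List.mem_cons_of_mem _ hv), hcc⟩
      obtain ⟨m, hm, hmh, hml, hmm⟩ := ih hp'
      have hmne : m ≠ [] := hm.1
      have hmhy : m.head? = some y := by rw [hmh]; simp
      rcases hE (x, y) hxy with harc | ⟨z, hzS, hz1, hz2⟩
      · refine ⟨x :: m, ⟨by simp, ?_, ?_⟩, by simp, ?_, ?_⟩
        · intro v hv; rcases List.mem_cons.1 hv with h | h
          · exact h ▸ hxV
          · exact hm.2.1 v h
        · refine List.isChain_cons.2 ⟨?_, hm.2.2⟩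
          intro z hz; rw [hmhy] at hz
          have : z = y := by simpa using hz.symm
          exact this ▸ harc
        · rw [myGetLast?_cons_ne x m hmne, hml]
          exact (myGetLast?_cons_ne x (y :: t') (by simp)).symm
        · intro v hv; rcases List.mem_cons.1 hv with h | h
          · exact Or.inl (h ▸ by simp)
          · rcases hmm v h with h' | h'
            · exact Or.inl (List.mem_cons_of_mem _ h')
            · exact Or.inr h'
      · have hzV : z ∈ G.V := (hwf _ hz1).2
        refine ⟨x :: z :: m, ⟨by simp, ?_, ?_⟩, by simp, ?_, ?_⟩
        · intro v hv; rcases List.mem_cons.1 hv with h | h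
          · exact h ▸ hxV
          · rcases List.mem_cons.1 h with h' | h'
            · exact h' ▸ hzV
            · exact hm.2.1 v h'
        · refine List.isChain_cons_cons.2 ⟨hz1, List.isChain_cons.2 ⟨?_, hm.2.2⟩⟩
          intro w hw; rw [hmhy] at hw
          have : w = y := by simpa using hw.symm
          exact this ▸ hz2
        · rw [myGetLast?_cons_ne x (z :: m) (by simp), myGetLast?_cons_ne z m hmne, hml]
          exact (myGetLast?_cons_ne x (y :: t') (by simp)).symm
        · intro v hv; rcases List.mem_cons.1 hv with h | h
          · exact Or.inl (h ▸ by simp)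
          · rcases List.mem_cons.1 h with h' | h'
            · exact Or.inr (h' ▸ hzS)
            · rcases hmm v h' with h'' | h''
              · exact Or.inl (List.mem_cons_of_mem _ h'')
              · exact Or.inr h''

lemma stable_transfer {G G' : Digraph' α} {root : α} {X X' : Finset α} (S : α → Prop)
    (hwf : ∀ e ∈ G.E, e.1 ∈ G.V ∧ e.2 ∈ G.V)
    (hV : ∀ v ∈ G'.V, v ∈ G.V)
    (hE : ∀ e ∈ G'.E, e ∈ G.E ∨ ∃ y, S y ∧ (e.1, y) ∈ G.E ∧ (y, e.2) ∈ G.E)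
    (hX : X' ⊆ X) {v : α} (hv : G.StableAncestor root X v) (hvS : ¬ S v) :
    G'.StableAncestor root X' v := by
  intro x hx p hp
  obtain ⟨q, hq, hqh, hql, hqm⟩ := lift_path S hwf hV hE p hp.1
  have hqP : G.PathFrom root x q := ⟨hq, by rw [hqh]; exact hp.2.1, by rw [hql]; exact hp.2.2⟩
  rcases hqm v (hv x (hX hx) q hqP) with h | h
  · exact h
  · exact absurd h hvS

lemma stable_parent {G : Digraph' α} {root : α} {X : Finset α} {u g : α}
    (hu : G.StableAncestor root X u) (hur : u ≠ root) (hdeg : G.inDeg u = 1)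
    (hg : (g, u) ∈ G.E) : G.StableAncestor root X g := by
  intro x hx p hp
  have humem := hu x hx p hp
  have hhne : p.head? ≠ some u := by
    rw [hp.2.1]; intro h; exact hur (Option.some.inj h).symm
  obtain ⟨w, hwp, hwu⟩ := chain'_pred _ p hp.1.2.2 humem hhne
  have h1 : (w, u) ∈ G.E.filter (fun e => e.2 = u) := Multiset.mem_filter.2 ⟨hwu, rfl⟩
  have h2 : (g, u) ∈ G.E.filter (fun e => e.2 = u) := Multiset.mem_filter.2 ⟨hg, rfl⟩
  have hwg : (w, u) = (g, u) := eq_of_card_eq_one hdeg h1 h2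
  have : w = g := by injection hwg
  exact this ▸ hwp

lemma root_child_not_stable {G : Digraph' α} {root u : α} {X : Finset α}
    (hwf : ∀ e ∈ G.E, e.1 ∈ G.V ∧ e.2 ∈ G.V)
    (hacy : G.Acyclic)
    (hnp : ∀ e : α × α, G.E.count e ≤ 1)
    (hrin : G.inDeg root = 0) (hrout : G.outDeg root = 2)
    (hsink : ∀ v ∈ G.V, G.outDeg v = 0 → v ∈ X)
    (hru : (root, u) ∈ G.E) (hdeg : G.inDeg u = 1) :
    ¬ G.StableAncestor root X u := by
  intro hst
  have hmem : (root, u) ∈ G.E.filter (fun e => e.1 = root) := Multiset.mem_filter.2 ⟨hru, rfl⟩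
  set s := G.E.filter (fun e => e.1 = root) with hs
  obtain ⟨t, hts⟩ : ∃ t, s = (root, u) ::ₘ t := ⟨s.erase _, (Multiset.cons_erase hmem).symm⟩
  have htc : Multiset.card t = 1 := by
    have h2 : Multiset.card s = 2 := hrout
    rw [hts, Multiset.card_cons] at h2; omega
  obtain ⟨e2, hte⟩ := Multiset.card_eq_one.1 htc
  have he2s : e2 ∈ s := by rw [hts, hte]; simp
  have he2E : e2 ∈ G.E := (Multiset.mem_filter.1 he2s).1
  have he2r : e2.1 = root := (Multiset.mem_filter.1 he2s).2
  set w := e2.2 with hw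
  have hwE : (root, w) ∈ G.E := by
    have he : e2 = (root, w) := by rw [Prod.ext_iff]; exact ⟨he2r, hw.symm⟩
    rwa [← he]
  have hwu : w ≠ u := by
    intro h
    have he2u : e2 = (root, u) := by rw [Prod.ext_iff]; exact ⟨he2r, by rw [← hw, h]⟩
    have hc2 : Multiset.count (root, u) s = 2 := by rw [hts, hte, he2u]; simp
    have hle : Multiset.count (root, u) s ≤ Multiset.count (root, u) G.E :=
      Multiset.count_le_of_le _ (Multiset.filter_le _ _)
    have := hnp (root, u); omega
  have hur : u ≠ root := by
    intro h; exact no_selfloop hacy hwf (h ▸ hru)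
  have hwr : w ≠ root := by
    intro h; exact no_selfloop hacy hwf (h ▸ hwE)
  have hrV : root ∈ G.V := (hwf _ hru).1
  obtain ⟨x, q, hq, hx0⟩ := reach_sink hacy hwf w (hwf _ hwE).2
  have hxX : x ∈ X := by
    have hxV : x ∈ G.V := by
      cases q with
      | nil => exact absurd rfl hq.1.1
      | cons a t =>
        have hx1 : x ∈ (a :: t).getLast? := hq.2.2 ▸ rfl
        obtain ⟨hne, h2⟩ := List.mem_getLast?_eq_getLast hx1
        exact hq.1.2.1 x (h2 ▸ List.getLast_mem hne)
    exact hsink x hxV hx0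
  have hqh : q.head? = some w := hq.2.1
  have hqne : q ≠ [] := hq.1.1
  have hP : G.PathFrom root x (root :: q) := by
    refine ⟨⟨by simp, ?_, ?_⟩, by simp, ?_⟩
    · intro v hv; rcases List.mem_cons.1 hv with h | h
      · exact h ▸ hrV
      · exact hq.1.2.1 v h
    · refine List.isChain_cons.2 ⟨?_, hq.1.2.2⟩
      intro z hz; rw [hqh] at hz
      have : z = w := by simpa using hz.symm
      exact this ▸ hwE
    · rw [myGetLast?_cons_ne root q hqne]; exact hq.2.2
  have humem : u ∈ root :: q := hst x hxX _ hP
  have huq : u ∈ q := by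
    rcases List.mem_cons.1 humem with h | h
    · exact absurd h hur
    · exact h
  have hrnq : root ∉ q := by
    intro hrq
    have hhr : q.head? ≠ some root := by rw [hqh]; simp [hwr]
    obtain ⟨w', _, hw'⟩ := chain'_pred _ q hq.1.2.2 hrq hhr
    have hmm : (w', root) ∈ G.E.filter (fun e => e.2 = root) := Multiset.mem_filter.2 ⟨hw', rfl⟩
    have hz : Multiset.card (G.E.filter (fun e => e.2 = root)) = 0 := hrin
    rw [Multiset.card_eq_zero] at hz
    rw [hz] at hmm; simp at hmm
  have hhu : q.head? ≠ some u := by rw [hqh]; simp [hwu]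
  obtain ⟨w'', hw''q, hw''⟩ := chain'_pred _ q hq.1.2.2 huq hhu
  have h1 : (w'', u) ∈ G.E.filter (fun e => e.2 = u) := Multiset.mem_filter.2 ⟨hw'', rfl⟩
  have h2 : (root, u) ∈ G.E.filter (fun e => e.2 = u) := Multiset.mem_filter.2 ⟨hru, rfl⟩
  have hwr2 : (w'', u) = (root, u) := eq_of_card_eq_one hdeg h1 h2
  have : w'' = root := by injection hwr2
  exact hrnq (this ▸ hw''q)
lemma inDeg_irrel {i1 i2 : DecidableEq α} {G : Digraph' α} {v : α} {n : ℕ}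
    (h : @Digraph'.inDeg α i1 G v = n) : @Digraph'.inDeg α i2 G v = n := by
  rwa [Subsingleton.elim i2 i1]

lemma outDeg_irrel {i1 i2 : DecidableEq α} {G : Digraph' α} {v : α} {n : ℕ}
    (h : @Digraph'.outDeg α i1 G v = n) : @Digraph'.outDeg α i2 G v = n := by
  rwa [Subsingleton.elim i2 i1]

lemma count_irrel {β : Type*} {i1 i2 : DecidableEq β} {m : Multiset β} {e : β} {n : ℕ}
    (h : @Multiset.count β i1 e m ≤ n) : @Multiset.count β i2 e m ≤ n := by
  rwa [Subsingleton.elim i2 i1]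

lemma no_arc_of_outDeg_zero {G : Digraph' α} {v w : α} (h0 : G.outDeg v = 0)
    (h : (v, w) ∈ G.E) : False := by
  have hm : (v, w) ∈ G.E.filter (fun e => e.1 = v) := Multiset.mem_filter.2 ⟨h, rfl⟩
  rw [Digraph'.outDeg, Multiset.card_eq_zero] at h0
  rw [h0] at hm; simp at hm

lemma exists_out_arc {G : Digraph' α} {v : α} (h : G.outDeg v ≠ 0) : ∃ w, (v, w) ∈ G.E := by
  have hne : Multiset.filter (fun e => e.1 = v) G.E ≠ 0 := by
    intro h0
    exact h (by rw [Digraph'.outDeg, Multiset.card_eq_zero]; exact h0)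
  obtain ⟨e, he⟩ := Multiset.exists_mem_of_ne_zero hne
  have heE : e ∈ G.E := (Multiset.mem_filter.1 he).1
  have hev : e.1 = v := (Multiset.mem_filter.1 he).2
  refine ⟨e.2, ?_⟩
  have : e = (v, e.2) := by rw [Prod.ext_iff]; exact ⟨hev, rfl⟩
  rwa [← this]

lemma two_le_outDeg {G : Digraph' α} {v a b : α} (h1 : (v, a) ∈ G.E) (h2 : (v, b) ∈ G.E)
    (hab : a ≠ b) : 2 ≤ G.outDeg v := by
  refine mem_two_le_card (a := (v, a)) (b := (v, b)) ?_ ?_ (by simp [hab])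
  · exact Multiset.mem_filter.2 ⟨h1, rfl⟩
  · exact Multiset.mem_filter.2 ⟨h2, rfl⟩

lemma out_unique {G : Digraph' α} {v a b : α} (h : G.outDeg v = 1)
    (h1 : (v, a) ∈ G.E) (h2 : (v, b) ∈ G.E) : a = b := by
  have hm1 : (v, a) ∈ G.E.filter (fun e => e.1 = v) := Multiset.mem_filter.2 ⟨h1, rfl⟩
  have hm2 : (v, b) ∈ G.E.filter (fun e => e.1 = v) := Multiset.mem_filter.2 ⟨h2, rfl⟩
  have := eq_of_card_eq_one h hm1 hm2
  injection this

lemma inDeg_of_erase {G G1 : Digraph' α} {x y u : α} (hE : G1.E = G.E.erase (x, y))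
    (hm : (x, y) ∈ G.E) (hne : y ≠ u) : G.inDeg u = G1.inDeg u := by
  rw [Digraph'.inDeg, Digraph'.inDeg, hE]
  conv_lhs => rw [(Multiset.cons_erase hm).symm]
  rw [Multiset.filter_cons_of_neg _ (by simpa using hne)]
end Aux

section Main
open Digraph'
variable {α : Type*} [DecidableEq α]

lemma card_one_recoverable (M : PhyloNet α) (h : M.G.V.card = 1) : M.Recoverable := by
  intro v hv
  have hV1 : M.G.V = {M.root} := by
    obtain ⟨a, ha⟩ := Finset.card_eq_one.1 h
    have := M.root_mem
    rw [ha] at this ⊢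
    simp at this
    rw [this]
  rcases M.binary with ⟨_, _, hX⟩ | ⟨hri, hro, _⟩
  · have hP := single_path M.G M.root_mem
    have hm := hv M.root (by rw [hX]; simp) _ hP
    simpa using hm
  · exfalso
    have hro' : M.G.outDeg M.root = 2 := outDeg_irrel hro
    obtain ⟨w, hw⟩ := exists_out_arc (G := M.G) (v := M.root) (by rw [hro']; omega)
    have he2 : w ∈ M.G.V := (M.wf _ hw).2
    have he2r : w = M.root := by rw [hV1] at he2; simpa using he2
    exact no_selfloop M.acyclic M.wf (he2r ▸ hw)

lemma pick_recoverable (N N' : PhyloNet α) (h : N.PickStep N') (hR : N'.Recoverable) :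
    N.Recoverable := by
  intro v hv
  by_contra hvr
  rcases h with ⟨a, b, hc⟩ | ⟨a, b, hc⟩
  · -- reduce cherry
    obtain ⟨⟨haX, hbX, hab, _⟩, hX', p, hpa, hpb, hcase⟩ := hc
    have hbin := N.binary
    rcases hbin with ⟨_, hE0, _⟩ | ⟨hri, hro, hleaf, hsink, hdeg⟩
    · rw [hE0] at hpa; simp at hpa
    have hri' : N.G.inDeg N.root = 0 := inDeg_irrel hri
    have hro' : N.G.outDeg N.root = 2 := outDeg_irrel hro
    have hleafV : ∀ x ∈ N.X, x ∈ N.G.V := fun x hx => (hleaf x hx).1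
    have hleafout : ∀ x ∈ N.X, N.G.outDeg x = 0 := fun x hx => outDeg_irrel (hleaf x hx).2.2
    have hsink' : ∀ w ∈ N.G.V, N.G.outDeg w = 0 → w ∈ N.X :=
      fun w hw h0 => hsink w hw (outDeg_irrel h0)
    have hdeg' : ∀ w ∈ N.G.V, w ≠ N.root → w ∉ N.X →
        (N.G.inDeg w = 1 ∧ N.G.outDeg w = 2) ∨ (N.G.inDeg w = 2 ∧ N.G.outDeg w = 1) := by
      intro w hw h1 h2
      rcases hdeg w hw h1 h2 with h | h
      · exact Or.inl ⟨inDeg_irrel h.1, outDeg_irrel h.2⟩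
      · exact Or.inr ⟨inDeg_irrel h.1, outDeg_irrel h.2⟩
    have hnp' : ∀ e : α × α, N.G.E.count e ≤ 1 := fun e => count_irrel (N.noParallel e)
    have hleafarc : ∀ x ∈ N.X, ∀ z : α, (x, z) ∈ N.G.E → False := by
      intro x hx z hxz
      exact no_arc_of_outDeg_zero (hleafout x hx) hxz
    rcases hcase with ⟨hpr, _, _, _⟩ | ⟨hpr, hroot', hsup⟩
    · -- p = root
      subst hpr
      have haV : a ∈ N.G.V := (N.wf _ hpa).2
      have hbV : b ∈ N.G.V := (N.wf _ hpb).2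
      have h1 := hv a haX _ (two_path N.G hpa N.root_mem haV)
      have h2 := hv b hbX _ (two_path N.G hpb N.root_mem hbV)
      simp at h1 h2
      rcases h1 with h1 | h1
      · exact hvr h1
      rcases h2 with h2 | h2
      · exact hvr h2
      exact hab (h1 ▸ h2 ▸ rfl)
    · -- p ≠ root
      obtain ⟨hdin, hdout, g, c, hgp, hpc, hV', hE'⟩ := hsup
      have hpV : p ∈ N.G.V := (N.wf _ hpa).1
      have hpX : p ∉ N.X := fun h => hleafarc p h a hpa
      have hout2 : 2 ≤ N.G.outDeg p := two_le_outDeg hpa hpb hab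
      have hinp : N.G.inDeg p = 1 := by
        rcases hdeg' p hpV hpr hpX with h | h
        · exact h.1
        · omega
      have hgpN : (g, p) ∈ N.G.E := (Multiset.mem_filter.1 hgp).1
      have hpcN : (p, c) ∈ N.G.E := (Multiset.mem_filter.1 hpc).1
      have hVcond : ∀ w ∈ N'.G.V, w ∈ N.G.V := by
        intro w hw
        rw [hV'] at hw
        have := Finset.mem_of_mem_erase hw
        exact Finset.mem_of_mem_erase this
      have hEcond : ∀ e ∈ N'.G.E, e ∈ N.G.E ∨
          ∃ y, y = p ∧ (e.1, y) ∈ N.G.E ∧ (y, e.2) ∈ N.G.E := by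
        intro e he
        rw [hE'] at he
        rcases Multiset.mem_add.1 he with h | h
        · left
          have h1 := (Multiset.mem_filter.1 h).1
          exact (Multiset.mem_filter.1 h1).1
        · right
          have he' : e = (g, c) := by simpa using h
          subst he'
          exact ⟨p, rfl, hgpN, hpcN⟩
      have hXsub : N'.X ⊆ N.X := by rw [hX']; exact Finset.erase_subset _ _
      by_cases hvp : v = p
      · subst hvp
        have hgst := stable_parent hv hvr hinp hgpN
        have hgroot : g ≠ N.root := by
          intro hh
          exact root_child_not_stable N.wf N.acyclic hnp' hri' hro' hsink'
            (hh ▸ hgpN) hinp hv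
        have hgv : g ≠ v := fun hh => no_selfloop N.acyclic N.wf (hh ▸ hgpN)
        have hst' := stable_transfer (fun y => y = v) N.wf hVcond hEcond hXsub hgst hgv
        have := hR g (by rw [hroot']; exact hst')
        rw [hroot'] at this
        exact hgroot this
      · have hst' := stable_transfer (fun y => y = p) N.wf hVcond hEcond hXsub hv hvp
        have := hR v (by rw [hroot']; exact hst')
        rw [hroot'] at this
        exact hvr this
  · -- cut reticulated cherry
    obtain ⟨haX, hbX, hab, hXeq, hroot', pa, pb, hpaa, hpbb, hpapb, hinpb, G1, hG1V, hG1E,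
      G2, hsup1, hsup2⟩ := hc
    obtain ⟨hin1, hout1, p1, c1, hp1pa, hpac1, hG2V, hG2E⟩ := hsup1
    obtain ⟨hin2, hout2, p2, c2, hp2pb, hpbc2, hV', hE'⟩ := hsup2
    have hbin := N.binary
    rcases hbin with ⟨_, hE0, _⟩ | ⟨hri, hro, hleaf, hsink, hdeg⟩
    · rw [hE0] at hpaa; simp at hpaa
    have hri' : N.G.inDeg N.root = 0 := inDeg_irrel hri
    have hro' : N.G.outDeg N.root = 2 := outDeg_irrel hro
    have hleafV : ∀ x ∈ N.X, x ∈ N.G.V := fun x hx => (hleaf x hx).1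
    have hleafout : ∀ x ∈ N.X, N.G.outDeg x = 0 := fun x hx => outDeg_irrel (hleaf x hx).2.2
    have hsink' : ∀ w ∈ N.G.V, N.G.outDeg w = 0 → w ∈ N.X :=
      fun w hw h0 => hsink w hw (outDeg_irrel h0)
    have hdeg' : ∀ w ∈ N.G.V, w ≠ N.root → w ∉ N.X →
        (N.G.inDeg w = 1 ∧ N.G.outDeg w = 2) ∨ (N.G.inDeg w = 2 ∧ N.G.outDeg w = 1) := by
      intro w hw h1 h2
      rcases hdeg w hw h1 h2 with h | h
      · exact Or.inl ⟨inDeg_irrel h.1, outDeg_irrel h.2⟩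
      · exact Or.inr ⟨inDeg_irrel h.1, outDeg_irrel h.2⟩
    have hnp' : ∀ e : α × α, N.G.E.count e ≤ 1 := fun e => count_irrel (N.noParallel e)
    have hleafarc : ∀ x ∈ N.X, ∀ z : α, (x, z) ∈ N.G.E → False := by
      intro x hx z hxz
      exact no_arc_of_outDeg_zero (hleafout x hx) hxz
    have hG1sub : ∀ e ∈ G1.E, e ∈ N.G.E := by
      intro e he; rw [hG1E] at he; exact Multiset.mem_of_mem_erase he
    have hpapbne : pa ≠ pb := fun hh => no_selfloop N.acyclic N.wf (hh ▸ hpapb)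
    have hp1paN : (p1, pa) ∈ N.G.E := hG1sub _ hp1pa
    have hpac1N : (pa, c1) ∈ N.G.E := hG1sub _ hpac1
    have hnotmem : (pa, pb) ∉ G1.E := by
      rw [hG1E]
      intro hh
      have hcnt := Multiset.count_erase_self (pa, pb) N.G.E
      have h1 : 1 ≤ Multiset.count (pa, pb) (N.G.E.erase (pa, pb)) := Multiset.one_le_count_iff_mem.2 hh
      have h2 := hnp' (pa, pb)
      omega
    have hc1pb : c1 ≠ pb := by
      intro hh
      exact hnotmem (hh ▸ hpac1)
    have hp1pb : p1 ≠ pb := by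
      intro hh
      exact no_two_cycle N.acyclic N.wf hpapb (hh ▸ hp1paN)
    have hp2pbN : (p2, pb) ∈ N.G.E := by
      rw [hG2E] at hp2pb
      rcases Multiset.mem_add.1 hp2pb with h | h
      · exact hG1sub _ (Multiset.mem_of_mem_filter h)
      · exfalso
        have : (p2, pb) = (p1, c1) := by simpa using h
        have : pb = c1 := by injection this
        exact hc1pb this.symm
    have hpbc2N : (pb, c2) ∈ N.G.E := by
      rw [hG2E] at hpbc2
      rcases Multiset.mem_add.1 hpbc2 with h | h
      · exact hG1sub _ (Multiset.mem_of_mem_filter h)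
      · exfalso
        have : (pb, c2) = (p1, c1) := by simpa using h
        have : pb = p1 := by injection this
        exact hp1pb this.symm
    have hVcond : ∀ w ∈ N'.G.V, w ∈ N.G.V := by
      intro w hw
      rw [hV'] at hw
      have h1 := Finset.mem_of_mem_erase hw
      rw [hG2V] at h1
      have h2 := Finset.mem_of_mem_erase h1
      rwa [hG1V] at h2
    have hEcond : ∀ e ∈ N'.G.E, e ∈ N.G.E ∨
        ∃ y, (y = pa ∨ y = pb) ∧ (e.1, y) ∈ N.G.E ∧ (y, e.2) ∈ N.G.E := by
      intro e he
      rw [hE'] at he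
      rcases Multiset.mem_add.1 he with h | h
      · have h1 := Multiset.mem_of_mem_filter h
        rw [hG2E] at h1
        rcases Multiset.mem_add.1 h1 with h2 | h2
        · exact Or.inl (hG1sub _ (Multiset.mem_of_mem_filter h2))
        · right
          have he' : e = (p1, c1) := by simpa using h2
          subst he'
          exact ⟨pa, Or.inl rfl, hp1paN, hpac1N⟩
      · right
        have he' : e = (p2, c2) := by simpa using h
        subst he'
        exact ⟨pb, Or.inr rfl, hp2pbN, hpbc2N⟩
    have hXsub : N'.X ⊆ N.X := by rw [hXeq]
    have hinpaN : N.G.inDeg pa = 1 := by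
      rw [inDeg_of_erase hG1E hpapb (Ne.symm hpapbne)]; exact hin1
    have hpbV : pb ∈ N.G.V := (N.wf _ hpbb).1
    have hpbX : pb ∉ N.X := fun hh => hleafarc pb hh b hpbb
    have hpbroot : pb ≠ N.root := by
      intro hh
      rw [hh] at hinpb
      rw [hinpb] at hri'
      simp at hri'
    have houtpb : N.G.outDeg pb = 1 := by
      rcases hdeg' pb hpbV hpbroot hpbX with h | h
      · omega
      · exact h.2
    by_cases hvpb : v = pb
    · -- pb cannot be stable: its unique out-arc goes to the leaf b, blocking paths to a
      subst hvpb
      have haV : a ∈ N.G.V := (N.wf _ hpaa).2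
      obtain ⟨P, hP⟩ := N.reach a haV
      have hmem := hv a haX P hP
      have hva : v ≠ a := by
        intro hh
        exact hleafarc a haX b (hh ▸ hpbb)
      have hlne : P.getLast? ≠ some v := by rw [hP.2.2]; simp [Ne.symm hva]
      obtain ⟨s, hsP, hs⟩ := chain'_succ _ P hP.1.2.2 hmem hlne
      have hsb' : s = b := out_unique houtpb hs hpbb
      rw [hsb'] at hsP
      have hlne2 : P.getLast? ≠ some b := by rw [hP.2.2]; simp [hab]
      obtain ⟨t, _, ht⟩ := chain'_succ _ P hP.1.2.2 hsP hlne2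
      exact hleafarc b hbX t ht
    · by_cases hvpa : v = pa
      · subst hvpa
        have hparoot : v ≠ N.root := hvr
        have hgst := stable_parent hv hparoot hinpaN hp1paN
        have hgroot : p1 ≠ N.root := by
          intro hh
          exact root_child_not_stable N.wf N.acyclic hnp' hri' hro' hsink'
            (hh ▸ hp1paN) hinpaN hv
        have hp1pa' : p1 ≠ v := fun hh => no_selfloop N.acyclic N.wf (hh ▸ hp1paN)
        have hst' := stable_transfer (fun y => y = v ∨ y = pb) N.wf hVcond hEcond hXsub hgst
          (by rintro (hh | hh); exact hp1pa' hh; exact hp1pb hh)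
        have := hR p1 (by rw [hroot']; exact hst')
        rw [hroot'] at this
        exact hgroot this
      · have hst' := stable_transfer (fun y => y = pa ∨ y = pb) N.wf hVcond hEcond hXsub hv
          (by rintro (hh | hh); exact hvpa hh; exact hvpb hh)
        have := hR v (by rw [hroot']; exact hst')
        rw [hroot'] at this
        exact hvr this
end Main

/-- every orchard network is recoverable: the only stable
ancestor of the whole leaf set is the root. -/
theorem orchard_recoverable
    {α : Type*} [DecidableEq α] (N : PhyloNet α) (h : N.IsOrchard) :
    N.Recoverable := by
  obtain ⟨M, hsteps, hcard⟩ := h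
  induction hsteps using Relation.ReflTransGen.head_induction_on with
  | refl => exact card_one_recoverable M hcard
  | head hstep _ ih => exact pick_recoverable _ _ hstep ih
end

section
/- Let N be a recoverable rooted binary phylogenetic network on X with |X| ≥ 2, and suppose N' is obtained from N by reducing a leaf of a cherry or cutting a reticulated cherry. Then N' is recoverable. -/
open scoped Classical

open scoped Classical

namespace PickAux

variable {α : Type*} [DecidableEq α]

lemma first_split {l : List α} {a : α} (h : a ∈ l) :
    ∃ s t, l = s ++ a :: t ∧ a ∉ s := by
  induction l with
  | nil => simp at h
  | cons b l ih =>
    by_cases hb : a = b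
    · exact ⟨[], l, by simp [hb], by simp⟩
    · rcases ih (List.mem_of_ne_of_mem hb h) with ⟨s, t, h1, h2⟩
      exact ⟨b :: s, t, by simp [h1], by simp [h2, hb]⟩

lemma mem_of_getLast?' {l : List α} {x : α} (h : l.getLast? = some x) : x ∈ l := by
  cases l with
  | nil => simp at h
  | cons a t =>
    rw [List.getLast?_eq_getLast (by simp)] at h
    simp at h
    rw [← h]
    exact List.getLast_mem _

lemma chain'_succ_mem {R : α → α → Prop} {v x : α} :
    ∀ {l : List α}, l.Chain' R → v ∈ l → l.getLast? = some x → v ≠ x →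
      ∃ w ∈ l, R v w := by
  intro l
  induction l with
  | nil => intro _ hv; simp at hv
  | cons a t ih =>
    intro hc hv hx hvx
    cases t with
    | nil =>
      simp at hx hv
      exact absurd (by simp_all) hvx
    | cons b t' =>
      rcases List.isChain_cons_cons.mp hc with ⟨hab, hc'⟩
      by_cases hva : v = a
      · exact ⟨b, by simp, hva ▸ hab⟩
      · have hvm : v ∈ b :: t' := by
          rcases List.mem_cons.mp hv with h | h
          · exact absurd h hva
          · exact h
        have hx' : (b :: t').getLast? = some x := by
          rwa [List.getLast?_cons_cons] at hx
        rcases ih hc' hvm hx' hvx with ⟨w, hw, hr⟩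
        exact ⟨w, by simp [hw], hr⟩

lemma chain'_pred {R : α → α → Prop} {x : α} :
    ∀ {l : List α} {a : α}, (a :: l).Chain' R → (a :: l).getLast? = some x →
      x = a ∨ ∃ w ∈ a :: l, R w x := by
  intro l
  induction l with
  | nil =>
    intro a _ hx
    simp at hx
    first
    | exact Or.inl hx
    | exact Or.inl hx.symm
  | cons b t ih =>
    intro a hc hx
    rcases List.isChain_cons_cons.mp hc with ⟨hab, hc'⟩
    have hx' : (b :: t).getLast? = some x := by
      rwa [List.getLast?_cons_cons] at hx
    rcases ih hc' hx' with h | ⟨w, hw, hr⟩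
    · right; exact ⟨a, by simp, h ▸ hab⟩
    · right; exact ⟨w, by simp [hw], hr⟩

lemma chain'_mono_mem {R S : α → α → Prop} :
    ∀ {l : List α}, l.Chain' R → (∀ u ∈ l, ∀ w ∈ l, R u w → S u w) → l.Chain' S := by
  intro l
  induction l with
  | nil => intro _ _; exact List.isChain_nil
  | cons a t ih =>
    intro hc hm
    cases t with
    | nil => exact List.isChain_singleton a
    | cons b t' =>
      rcases List.isChain_cons_cons.mp hc with ⟨hab, hc'⟩
      exact List.isChain_cons_cons.mpr ⟨hm a (by simp) b (by simp) hab,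
        ih hc' (fun u hu w hw hr => hm u (by simp [hu]) w (by simp [hw]) hr)⟩

lemma card_one_eq {β : Type*} {s : Multiset β} (h : Multiset.card s = 1)
    {x y : β} (hx : x ∈ s) (hy : y ∈ s) : x = y := by
  obtain ⟨z, rfl⟩ := Multiset.card_eq_one.mp h
  simp at hx hy; rw [hx, hy]

lemma two_le_card_of_mem {β : Type*} [DecidableEq β] {s : Multiset β} {x y : β}
    (hx : x ∈ s) (hy : y ∈ s) (hxy : x ≠ y) : 2 ≤ Multiset.card s := by
  have hy' : y ∈ s.erase x := (Multiset.mem_erase_of_ne (Ne.symm hxy)).mpr hy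
  have h1 : 0 < Multiset.card (s.erase x) := Multiset.card_pos_iff_exists_mem.mpr ⟨y, hy'⟩
  have h2 := Multiset.card_erase_add_one hx
  omega

lemma mem_pair_card_two {β : Type*} [DecidableEq β] {s : Multiset β}
    (h : Multiset.card s = 2) {x y z : β} (hx : x ∈ s) (hy : y ∈ s) (hxy : x ≠ y)
    (hz : z ∈ s) : z = x ∨ z = y := by
  by_cases hzx : z = x
  · exact Or.inl hzx
  · right
    have hy' : y ∈ s.erase x := (Multiset.mem_erase_of_ne (Ne.symm hxy)).mpr hy
    have hz' : z ∈ s.erase x := (Multiset.mem_erase_of_ne hzx).mpr hz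
    have hc : Multiset.card (s.erase x) = 1 := by
      have := Multiset.card_erase_add_one hx; omega
    exact card_one_eq hc hz' hy'

end PickAux

namespace Digraph'

open PickAux

variable {α : Type*} [DecidableEq α]

lemma inDeg_congr (G : Digraph' α) (v : α) :
    @Digraph'.inDeg α (fun a b => Classical.propDecidable (a = b)) G v = G.inDeg v := by
  unfold Digraph'.inDeg; congr!

lemma outDeg_congr (G : Digraph' α) (v : α) :
    @Digraph'.outDeg α (fun a b => Classical.propDecidable (a = b)) G v = G.outDeg v := by
  unfold Digraph'.outDeg; congr!

lemma outDeg_ne_zero {G : Digraph' α} {u w : α} (h : (u, w) ∈ G.E) :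
    G.outDeg u ≠ 0 := by
  have hm : (u, w) ∈ G.E.filter (fun e => e.1 = u) := Multiset.mem_filter.mpr ⟨h, rfl⟩
  have := Multiset.card_pos_iff_exists_mem.mpr ⟨(u, w), hm⟩
  unfold outDeg; omega

lemma inDeg_ne_zero {G : Digraph' α} {u w : α} (h : (u, w) ∈ G.E) :
    G.inDeg w ≠ 0 := by
  have hm : (u, w) ∈ G.E.filter (fun e => e.2 = w) := Multiset.mem_filter.mpr ⟨h, rfl⟩
  have := Multiset.card_pos_iff_exists_mem.mpr ⟨(u, w), hm⟩
  unfold inDeg; omega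

lemma parent_unique {G : Digraph' α} {v u w : α} (h : G.inDeg v = 1)
    (hu : (u, v) ∈ G.E) (hw : (w, v) ∈ G.E) : u = w := by
  have h1 : (u, v) ∈ G.E.filter (fun e => e.2 = v) := Multiset.mem_filter.mpr ⟨hu, rfl⟩
  have h2 : (w, v) ∈ G.E.filter (fun e => e.2 = v) := Multiset.mem_filter.mpr ⟨hw, rfl⟩
  have := card_one_eq h h1 h2
  exact congrArg Prod.fst this

lemma child_unique {G : Digraph' α} {v u w : α} (h : G.outDeg v = 1)
    (hu : (v, u) ∈ G.E) (hw : (v, w) ∈ G.E) : u = w := by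
  have h1 : (v, u) ∈ G.E.filter (fun e => e.1 = v) := Multiset.mem_filter.mpr ⟨hu, rfl⟩
  have h2 : (v, w) ∈ G.E.filter (fun e => e.1 = v) := Multiset.mem_filter.mpr ⟨hw, rfl⟩
  have := card_one_eq h h1 h2
  exact congrArg Prod.snd this

lemma two_le_outDeg {G : Digraph' α} {v a b : α} (ha : (v, a) ∈ G.E)
    (hb : (v, b) ∈ G.E) (hab : a ≠ b) : 2 ≤ G.outDeg v := by
  have h1 : (v, a) ∈ G.E.filter (fun e => e.1 = v) := Multiset.mem_filter.mpr ⟨ha, rfl⟩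
  have h2 : (v, b) ∈ G.E.filter (fun e => e.1 = v) := Multiset.mem_filter.mpr ⟨hb, rfl⟩
  exact two_le_card_of_mem h1 h2 (by simp [hab])

lemma out_arc_pair {G : Digraph' α} {v a b z : α} (h : G.outDeg v = 2)
    (ha : (v, a) ∈ G.E) (hb : (v, b) ∈ G.E) (hab : a ≠ b) (hz : (v, z) ∈ G.E) :
    z = a ∨ z = b := by
  have h1 : (v, a) ∈ G.E.filter (fun e => e.1 = v) := Multiset.mem_filter.mpr ⟨ha, rfl⟩
  have h2 : (v, b) ∈ G.E.filter (fun e => e.1 = v) := Multiset.mem_filter.mpr ⟨hb, rfl⟩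
  have h3 : (v, z) ∈ G.E.filter (fun e => e.1 = v) := Multiset.mem_filter.mpr ⟨hz, rfl⟩
  rcases mem_pair_card_two h h1 h2 (by simp [hab]) h3 with h | h
  · exact Or.inl (congrArg Prod.snd h)
  · exact Or.inr (congrArg Prod.snd h)

lemma reaches_self {G : Digraph' α} {v : α} (h : v ∈ G.V) : G.Reaches v v :=
  ⟨[v], ⟨by simp, by simpa, List.isChain_singleton v⟩, by simp, by simp⟩

lemma reaches_of_arc {G : Digraph' α} {u w : α} (h : (u, w) ∈ G.E)
    (hu : u ∈ G.V) (hw : w ∈ G.V) : G.Reaches u w :=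
  ⟨[u, w], ⟨by simp, by intro x hx; simp at hx; rcases hx with rfl | rfl; exacts [hu, hw],
    List.isChain_pair.mpr h⟩, by simp, by simp⟩

lemma pathFrom_last_arc {G : Digraph' α} {r x : α} {p : List α}
    (h : G.PathFrom r x p) (hxr : x ≠ r) : ∃ w ∈ p, (w, x) ∈ G.E := by
  obtain ⟨⟨hne, _, hch⟩, hh, hl⟩ := h
  cases p with
  | nil => exact absurd rfl hne
  | cons a t =>
    have hra : a = r := by simpa using hh
    rcases PickAux.chain'_pred hch hl with h | h
    · exact absurd (h.trans hra) hxr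
    · exact h

lemma pathFrom_concat {G : Digraph' α} {r y q : α} {P1 : List α}
    (h1 : P1 ≠ []) (hh : P1.head? = some r)
    (hch : P1.Chain' (fun u w => (u, w) ∈ G.E))
    (hV : ∀ u ∈ P1, u ∈ G.V) (hy : y ∈ G.V)
    (hq : P1.getLast? = some q) (harc : (q, y) ∈ G.E) :
    G.PathFrom r y (P1 ++ [y]) := by
  refine ⟨⟨by simp, ?_, ?_⟩, ?_, by simp [List.getLast?_concat]⟩
  · intro u hu
    rcases List.mem_append.mp hu with h | h
    · exact hV u h
    · simp at h; subst h; exact hy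
  · apply List.isChain_append.mpr
    refine ⟨hch, List.isChain_singleton y, ?_⟩
    intro a ha c hc
    simp at hc; subst hc
    rw [hq] at ha; simp at ha; subst ha; exact harc
  · cases P1 with
    | nil => exact absurd rfl h1
    | cons a t => simpa using hh

lemma split_facts {G : Digraph' α} {r x s : α} {P : List α}
    (hP : G.PathFrom r x P) (hs : s ∈ P) (hsr : s ≠ r) :
    ∃ P1 rest, P = P1 ++ s :: rest ∧ s ∉ P1 ∧ P1 ≠ [] ∧ P1.head? = some r ∧
      (P1 ++ [s]).Chain' (fun u w => (u, w) ∈ G.E) ∧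
      ∃ q, P1.getLast? = some q ∧ (q, s) ∈ G.E := by
  obtain ⟨⟨hne, hV, hch⟩, hh, hl⟩ := hP
  obtain ⟨P1, rest, hPeq, hns⟩ := PickAux.first_split hs
  have h1 : P1 ≠ [] := by
    intro h; subst h
    simp at hPeq; rw [hPeq] at hh
    simp at hh
    first
    | exact hsr hh
    | exact hsr hh.symm
  have hch2 : ((P1 ++ [s]) ++ rest).Chain' (fun u w => (u, w) ∈ G.E) := by
    rw [List.append_assoc]; simpa [hPeq] using hch
  have hch3 : (P1 ++ [s]).Chain' (fun u w => (u, w) ∈ G.E) :=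
    (List.isChain_append.mp hch2).1
  have hhp : P1.head? = some r := by
    cases P1 with
    | nil => exact absurd rfl h1
    | cons a t => rw [hPeq] at hh; simpa using hh
  obtain ⟨hchP1, _, hlink⟩ := List.isChain_append.mp hch3
  refine ⟨P1, rest, hPeq, hns, h1, hhp, hch3, P1.getLast h1, List.getLast?_eq_getLast h1, ?_⟩
  exact hlink _ (by rw [List.getLast?_eq_getLast h1]; simp) s (by simp)

lemma leaf_not_mem_prefix {G : Digraph' α} {P1 : List α} {s z : α}
    (hch : (P1 ++ [s]).Chain' (fun u w => (u, w) ∈ G.E))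
    (hz : G.outDeg z = 0) (hzs : z ≠ s) : z ∉ P1 := by
  intro hzm
  obtain ⟨w, _, harc⟩ := PickAux.chain'_succ_mem hch (by simp [hzm])
    (by simp [List.getLast?_concat]) hzs
  exact outDeg_ne_zero harc hz

end Digraph'

namespace PhyloNet

variable {α : Type*} [DecidableEq α]

lemma binary2 (N : PhyloNet α) (h2 : 2 ≤ N.X.card) :
    N.G.inDeg N.root = 0 ∧ N.G.outDeg N.root = 2 ∧
    (∀ x ∈ N.X, x ∈ N.G.V ∧ N.G.inDeg x = 1 ∧ N.G.outDeg x = 0) ∧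
    (∀ v ∈ N.G.V, N.G.outDeg v = 0 → v ∈ N.X) ∧
    (∀ u ∈ N.G.V, u ≠ N.root → u ∉ N.X →
      (N.G.inDeg u = 1 ∧ N.G.outDeg u = 2) ∨ (N.G.inDeg u = 2 ∧ N.G.outDeg u = 1)) := by
  rcases N.binary with h | h
  · exfalso; rw [h.2.2, Finset.card_singleton] at h2; omega
  · simpa only [Digraph'.inDeg_congr, Digraph'.outDeg_congr] using h

lemma sa_not_leaf (M : PhyloNet α) (h2 : 2 ≤ M.X.card) {v : α}
    (hv : M.G.StableAncestor M.root M.X v) : v ∉ M.X := by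
  intro hvX
  obtain ⟨_, _, hleaf, _, _⟩ := M.binary2 h2
  obtain ⟨y, hy, y2, hy2, hne⟩ := Finset.one_lt_card.mp (by omega : 1 < M.X.card)
  obtain ⟨w, hw, hwv⟩ : ∃ w ∈ M.X, w ≠ v := by
    by_cases h : y = v
    · exact ⟨y2, hy2, fun hc => hne (h.trans hc.symm)⟩
    · exact ⟨y, hy, h⟩
  obtain ⟨p, hp⟩ := M.reach w (hleaf w hw).1
  have hvp := hv w hw p hp
  obtain ⟨w2, _, harc⟩ := PickAux.chain'_succ_mem hp.1.2.2 hvp hp.2.2 (Ne.symm hwv)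
  exact Digraph'.outDeg_ne_zero harc (hleaf v hvX).2.2

end PhyloNet
/-- picking a cherry or a reticulated cherry of a recoverable
network yields a recoverable network. -/
theorem recoverable_of_pickStep
    {α : Type*} [DecidableEq α] (N N' : PhyloNet α)
    (hX : 2 ≤ N.X.card) (hrec : N.Recoverable) (h : N.PickStep N') :
    N'.Recoverable := by
  obtain ⟨hrin, hrout, hleaf, hleafrev, hmid⟩ := N.binary2 hX
  intro v hv
  rcases h with ⟨a, b, hred⟩ | ⟨a, b, hcut⟩
  · -- Reduce cherry
    obtain ⟨⟨ha, hb, hab, -⟩, hX', pp, hppa, hppb, hcase⟩ := hred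
    rcases hcase with ⟨hpr, hV1, hE0, hroot⟩ | ⟨hpr, hroot, hsupp⟩
    · -- parent is the root: N' is the trivial network on a
      have haX' : a ∈ N'.X := by rw [hX']; exact Finset.mem_erase.mpr ⟨hab, ha⟩
      have hpa : N'.G.PathFrom N'.root a [a] := by
        refine ⟨⟨by simp, ?_, List.isChain_singleton a⟩, by simp [hroot], by simp⟩
        intro u hu; simp at hu; subst hu; rw [hV1]; simp
      have hva := hv a haX' [a] hpa
      simp at hva; rw [hroot]; exact hva
    · -- parent pp is not the root
      obtain ⟨hin1, hout1, q, c, hq, hc, hVeq, hEeq⟩ := hsupp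
      have hppb' : pp ≠ b := fun h => Digraph'.outDeg_ne_zero (h ▸ hppa) (hleaf b hb).2.2
      have hppV : pp ∈ N.G.V := (N.wf _ hppa).1
      have hppX : pp ∉ N.X := fun hm => Digraph'.outDeg_ne_zero hppa (hleaf pp hm).2.2
      have haV : a ∈ N.G.V := (hleaf a ha).1
      have happ : a ≠ pp := fun h => hppX (h ▸ ha)
      have hmemG1 : ∀ u w : α, (u, w) ∈ N.G.E → u ≠ b → w ≠ b →
          (u, w) ∈ (N.G.deleteVertex b).E := by
        intro u w h h1 h2
        exact Multiset.mem_filter.mpr ⟨h, ⟨h1, h2⟩⟩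
      have hca : c = a := Digraph'.child_unique hout1 hc (hmemG1 _ _ hppa hppb' hab)
      have arcA : ∀ u w : α, (u, w) ∈ N.G.E → u ≠ b → w ≠ b → u ≠ pp → w ≠ pp →
          (u, w) ∈ N'.G.E := by
        intro u w h h1 h2 h3 h4
        rw [hEeq]
        exact Multiset.mem_add.mpr (Or.inl
          (Multiset.mem_filter.mpr ⟨hmemG1 _ _ h h1 h2, ⟨h3, h4⟩⟩))
      have vtxA : ∀ u : α, u ∈ N.G.V → u ≠ b → u ≠ pp → u ∈ N'.G.V := by
        intro u h h1 h2
        rw [hVeq]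
        exact Finset.mem_erase.mpr ⟨h2, Finset.mem_erase.mpr ⟨h1, h⟩⟩
      have hnewA : (q, a) ∈ N'.G.E := by
        rw [hEeq]; exact Multiset.mem_add.mpr (Or.inr (by simp [hca]))
      rcases Nat.lt_or_ge N.X.card 3 with hc2 | hc3
      · -- |X| = 2 : contradiction with pp ≠ root
        exfalso
        have hXeq : ({a, b} : Finset α) = N.X :=
          Finset.eq_of_subset_of_card_le
            (by intro z hz; simp at hz; rcases hz with rfl | rfl; exacts [ha, hb])
            (by rw [Finset.card_pair hab]; omega)
        have hppSA : N.G.StableAncestor N.root N.X pp := by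
          intro x hx P hP
          have hxr : x ≠ N.root := by
            intro h
            have h1 := (hleaf x hx).2.1
            rw [h, hrin] at h1
            omega
          obtain ⟨w, hwP, hwarc⟩ := Digraph'.pathFrom_last_arc hP hxr
          have hx2 : x = a ∨ x = b := by rw [← hXeq] at hx; simpa using hx
          rcases hx2 with h2 | h2
          · have hw : w = pp :=
              Digraph'.parent_unique (hleaf x hx).2.1 hwarc (by rw [h2]; exact hppa)
            rwa [hw] at hwP
          · have hw : w = pp :=
              Digraph'.parent_unique (hleaf x hx).2.1 hwarc (by rw [h2]; exact hppb)
            rwa [hw] at hwP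
        exact hpr (hrec pp hppSA)
      · -- main case
        have haX' : a ∈ N'.X := by rw [hX']; exact Finset.mem_erase.mpr ⟨hab, ha⟩
        have hX'2 : 2 ≤ N'.X.card := by
          rw [hX', Finset.card_erase_of_mem hb]; omega
        have hvX' : v ∉ N'.X := N'.sa_not_leaf hX'2 hv
        have hva : v ≠ a := fun h => hvX' (h ▸ haX')
        have key : N.G.StableAncestor N.root N.X v := by
          intro x hx P hP
          have hVP : ∀ u ∈ P, u ∈ N.G.V := hP.1.2.1
          by_cases hppP : pp ∈ P
          · obtain ⟨P1, rest, hPeq, hnpp, h1, hh1, hchpre, q0, hq0, hq0arc⟩ :=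
              Digraph'.split_facts hP hppP hpr
            have hq0b : q0 ≠ b :=
              fun h => Digraph'.outDeg_ne_zero (h ▸ hq0arc) (hleaf b hb).2.2
            have hq0q : q0 = q :=
              Digraph'.parent_unique hin1 (hmemG1 _ _ hq0arc hq0b hppb') hq
            have hbP1 : b ∉ P1 :=
              Digraph'.leaf_not_mem_prefix hchpre (hleaf b hb).2.2 (Ne.symm hppb')
            have hchP1 := (List.isChain_append.mp hchpre).1
            have hQ : N'.G.PathFrom N.root a (P1 ++ [a]) := by
              refine Digraph'.pathFrom_concat h1 hh1 ?_ ?_ (vtxA a haV hab happ) hq0 ?_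
              · exact PickAux.chain'_mono_mem hchP1 (fun u hu w hw hr =>
                  arcA u w hr (fun h => hbP1 (h ▸ hu)) (fun h => hbP1 (h ▸ hw))
                    (fun h => hnpp (h ▸ hu)) (fun h => hnpp (h ▸ hw)))
              · intro u hu
                exact vtxA u (hVP u (by rw [hPeq]; exact List.mem_append.mpr (Or.inl hu)))
                  (fun h => hbP1 (h ▸ hu)) (fun h => hnpp (h ▸ hu))
              · rw [hq0q]; exact hnewA
            have hvQ := hv a haX' (P1 ++ [a]) (by rw [hroot]; exact hQ)
            rcases List.mem_append.mp hvQ with hm | hm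
            · rw [hPeq]; exact List.mem_append.mpr (Or.inl hm)
            · simp at hm; exact absurd hm hva
          · have hbP : b ∉ P := by
              intro hbm
              by_cases hbx : b = x
              · subst hbx
                have hbr : b ≠ N.root := by
                  intro h
                  have h1 := (hleaf b hb).2.1
                  rw [h, hrin] at h1
                  omega
                obtain ⟨w, hwP, hwarc⟩ :=
                  Digraph'.pathFrom_last_arc hP hbr
                have hwpp : w = pp :=
                  Digraph'.parent_unique (hleaf b hb).2.1 hwarc hppb
                exact hppP (hwpp ▸ hwP)
              · obtain ⟨w, -, hwarc⟩ :=
                  PickAux.chain'_succ_mem hP.1.2.2 hbm hP.2.2 hbx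
                exact Digraph'.outDeg_ne_zero hwarc (hleaf b hb).2.2
            have hxP : x ∈ P := PickAux.mem_of_getLast?' hP.2.2
            have hxb : x ≠ b := fun h => hbP (h ▸ hxP)
            have hQ : N'.G.PathFrom N.root x P := by
              obtain ⟨⟨hne, hVp, hch⟩, hh, hl⟩ := hP
              refine ⟨⟨hne, ?_, ?_⟩, hh, hl⟩
              · intro u hu
                exact vtxA u (hVp u hu) (fun h => hbP (h ▸ hu)) (fun h => hppP (h ▸ hu))
              · exact PickAux.chain'_mono_mem hch (fun u hu w hw hr =>
                  arcA u w hr (fun h => hbP (h ▸ hu)) (fun h => hbP (h ▸ hw))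
                    (fun h => hppP (h ▸ hu)) (fun h => hppP (h ▸ hw)))
            have hxX' : x ∈ N'.X := by rw [hX']; exact Finset.mem_erase.mpr ⟨hxb, hx⟩
            exact hv x hxX' P (by rw [hroot]; exact hQ)
        rw [hroot]; exact hrec v key
  · -- Cut reticulated cherry
    obtain ⟨ha, hb, hab, hX', hroot, pa, pb, hpaa, hpbb, hpapb, hinpb,
      G1, hG1V, hG1E, G2, hsup2, hsup3⟩ := hcut
    obtain ⟨hin2, hout2, qa, ca, hqa, hca, hV2, hE2⟩ := hsup2
    obtain ⟨hin3, hout3, qb, cb, hqb, hcb, hV3, hE3⟩ := hsup3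
    have hpaV : pa ∈ N.G.V := (N.wf _ hpaa).1
    have hpbV : pb ∈ N.G.V := (N.wf _ hpbb).1
    have hpapb' : pa ≠ pb := by
      intro h; subst h
      exact N.acyclic _ hpapb (Digraph'.reaches_self hpaV)
    have hal := hleaf a ha
    have hbl := hleaf b hb
    have hapb : a ≠ pb := fun h => Digraph'.outDeg_ne_zero (h.symm ▸ hpbb) hal.2.2
    have hapa : a ≠ pa := fun h => Digraph'.outDeg_ne_zero (h.symm ▸ hpaa) hal.2.2
    have hbpb : b ≠ pb := fun h => Digraph'.outDeg_ne_zero (h.symm ▸ hpbb) hbl.2.2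
    have hbpa : b ≠ pa := fun h => Digraph'.outDeg_ne_zero (h.symm ▸ hpaa) hbl.2.2
    have hpaX : pa ∉ N.X := fun hm => Digraph'.outDeg_ne_zero hpaa (hleaf pa hm).2.2
    have hpbX : pb ∉ N.X := fun hm => Digraph'.outDeg_ne_zero hpbb (hleaf pb hm).2.2
    have hmemG1 : ∀ u w : α, (u, w) ∈ N.G.E → (u, w) ≠ (pa, pb) → (u, w) ∈ G1.E := by
      intro u w h h1
      rw [hG1E]
      exact (Multiset.mem_erase_of_ne h1).mpr h
    have hqaN : (qa, pa) ∈ N.G.E := by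
      have h0 := hqa; rw [hG1E] at h0; exact Multiset.mem_of_mem_erase h0
    have hparoot : pa ≠ N.root := by
      intro h
      exact Digraph'.inDeg_ne_zero hqaN (by rw [h]; exact hrin)
    have hpbroot : pb ≠ N.root := by
      intro h
      have h0 := hrin; rw [← h] at h0; omega
    have houtpa : N.G.outDeg pa = 2 := by
      have h2le := Digraph'.two_le_outDeg hpaa hpapb hapb
      rcases hmid pa hpaV hparoot hpaX with ⟨-, h2⟩ | ⟨-, h2⟩
      · exact h2
      · omega
    have houtpb : N.G.outDeg pb = 1 := by
      rcases hmid pb hpbV hpbroot hpbX with ⟨h1, -⟩ | ⟨-, h2⟩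
      · omega
      · exact h2
    have hca' : ca = a :=
      Digraph'.child_unique hout2 hca
        (hmemG1 _ _ hpaa (fun hc => hapb (congrArg Prod.snd hc)))
    have hcb' : cb = b := by
      refine Digraph'.child_unique hout3 hcb ?_
      rw [hE2]
      refine Multiset.mem_add.mpr (Or.inl (Multiset.mem_filter.mpr
        ⟨hmemG1 _ _ hpbb (fun hc => hbpb (congrArg Prod.snd hc)),
         ⟨Ne.symm hpapb', fun hc => hbpa hc⟩⟩))
    have memG2 : ∀ u w : α, (u, w) ∈ G1.E → u ≠ pa → w ≠ pa → (u, w) ∈ G2.E := by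
      intro u w h h1 h2
      rw [hE2]
      exact Multiset.mem_add.mpr (Or.inl (Multiset.mem_filter.mpr ⟨h, ⟨h1, h2⟩⟩))
    have arcB : ∀ u w : α, (u, w) ∈ N.G.E → u ≠ pa → w ≠ pa → u ≠ pb → w ≠ pb →
        (u, w) ∈ N'.G.E := by
      intro u w h h1 h2 h3 h4
      rw [hE3]
      refine Multiset.mem_add.mpr (Or.inl (Multiset.mem_filter.mpr ⟨?_, ⟨h3, h4⟩⟩))
      exact memG2 _ _ (hmemG1 _ _ h (fun hc => h1 (congrArg Prod.fst hc))) h1 h2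
    have vtxB : ∀ u : α, u ∈ N.G.V → u ≠ pa → u ≠ pb → u ∈ N'.G.V := by
      intro u h h1 h2
      rw [hV3]
      refine Finset.mem_erase.mpr ⟨h2, ?_⟩
      rw [hV2, hG1V]
      exact Finset.mem_erase.mpr ⟨h1, h⟩
    have hqapb : qa ≠ pb := by
      intro h; subst h
      exact N.acyclic _ hpapb
        (Digraph'.reaches_of_arc hqaN (N.wf _ hqaN).1 (N.wf _ hqaN).2)
    have hnewa : (qa, a) ∈ N'.G.E := by
      rw [hE3]
      refine Multiset.mem_add.mpr (Or.inl (Multiset.mem_filter.mpr ⟨?_, ⟨hqapb, hapb⟩⟩))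
      rw [hE2]
      exact Multiset.mem_add.mpr (Or.inr (by simp [hca']))
    have hnewb : (qb, b) ∈ N'.G.E := by
      rw [hE3]
      exact Multiset.mem_add.mpr (Or.inr (by simp [hcb']))
    have haX' : a ∈ N'.X := by rw [hX']; exact ha
    have hbX' : b ∈ N'.X := by rw [hX']; exact hb
    have hvX' : v ∉ N'.X := N'.sa_not_leaf (by rw [hX']; exact hX) hv
    have hva : v ≠ a := fun h => hvX' (h ▸ haX')
    have hvb : v ≠ b := fun h => hvX' (h ▸ hbX')
    have key : N.G.StableAncestor N.root N.X v := by
      intro x hx P hP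
      have hVP : ∀ u ∈ P, u ∈ N.G.V := hP.1.2.1
      by_cases hpaP : pa ∈ P
      · obtain ⟨P1, rest, hPeq, hnpa, h1, hh1, hchpre, q0, hq0, hq0arc⟩ :=
          Digraph'.split_facts hP hpaP hparoot
        have hq0qa : q0 = qa :=
          Digraph'.parent_unique hin2
            (hmemG1 _ _ hq0arc (fun hc => hpapb' (congrArg Prod.snd hc))) hqa
        have hbP1 : b ∉ P1 :=
          Digraph'.leaf_not_mem_prefix hchpre hbl.2.2 hbpa
        have hpbP1 : pb ∉ P1 := by
          intro hm
          obtain ⟨w, hwmem, hwarc⟩ := PickAux.chain'_succ_mem hchpre (by simp [hm])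
            (by simp [List.getLast?_concat]) (Ne.symm hpapb')
          have hwb : w = b := Digraph'.child_unique houtpb hwarc hpbb
          subst hwb
          rcases List.mem_append.mp hwmem with hm2 | hm2
          · exact hbP1 hm2
          · simp at hm2; exact hbpa hm2
        have hchP1 := (List.isChain_append.mp hchpre).1
        have hQ : N'.G.PathFrom N.root a (P1 ++ [a]) := by
          refine Digraph'.pathFrom_concat h1 hh1 ?_ ?_ (vtxB a hal.1 hapa hapb) hq0 ?_
          · exact PickAux.chain'_mono_mem hchP1 (fun u hu w hw hr =>
              arcB u w hr (fun h => hnpa (h ▸ hu)) (fun h => hnpa (h ▸ hw))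
                (fun h => hpbP1 (h ▸ hu)) (fun h => hpbP1 (h ▸ hw)))
          · intro u hu
            exact vtxB u (hVP u (by rw [hPeq]; exact List.mem_append.mpr (Or.inl hu)))
              (fun h => hnpa (h ▸ hu)) (fun h => hpbP1 (h ▸ hu))
          · rw [hq0qa]; exact hnewa
        have hvQ := hv a haX' (P1 ++ [a]) (by rw [hroot]; exact hQ)
        rcases List.mem_append.mp hvQ with hm | hm
        · rw [hPeq]; exact List.mem_append.mpr (Or.inl hm)
        · simp at hm; exact absurd hm hva
      · by_cases hpbP : pb ∈ P
        · obtain ⟨P1, rest, hPeq, hnpb, h1, hh1, hchpre, q0, hq0, hq0arc⟩ :=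
            Digraph'.split_facts hP hpbP hpbroot
          have hP1subP : ∀ u ∈ P1, u ∈ P := by
            intro u hu; rw [hPeq]; exact List.mem_append.mpr (Or.inl hu)
          have hq0pa : q0 ≠ pa := by
            intro h
            exact hpaP (h ▸ hP1subP q0 (PickAux.mem_of_getLast?' hq0))
          have hq0G2 : (q0, pb) ∈ G2.E :=
            memG2 _ _ (hmemG1 _ _ hq0arc (fun hc => hq0pa (congrArg Prod.fst hc)))
              hq0pa (Ne.symm hpapb')
          have hq0qb : q0 = qb := Digraph'.parent_unique hin3 hq0G2 hqb
          have hchP1 := (List.isChain_append.mp hchpre).1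
          have hQ : N'.G.PathFrom N.root b (P1 ++ [b]) := by
            refine Digraph'.pathFrom_concat h1 hh1 ?_ ?_ (vtxB b hbl.1 hbpa hbpb) hq0 ?_
            · exact PickAux.chain'_mono_mem hchP1 (fun u hu w hw hr =>
                arcB u w hr (fun h => hpaP (h ▸ hP1subP u hu))
                  (fun h => hpaP (h ▸ hP1subP w hw))
                  (fun h => hnpb (h ▸ hu)) (fun h => hnpb (h ▸ hw)))
            · intro u hu
              exact vtxB u (hVP u (hP1subP u hu))
                (fun h => hpaP (h ▸ hP1subP u hu)) (fun h => hnpb (h ▸ hu))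
            · rw [hq0qb]; exact hnewb
          have hvQ := hv b hbX' (P1 ++ [b]) (by rw [hroot]; exact hQ)
          rcases List.mem_append.mp hvQ with hm | hm
          · exact hP1subP v hm
          · simp at hm; exact absurd hm hvb
        · have hQ : N'.G.PathFrom N.root x P := by
            obtain ⟨⟨hne, hVp, hch⟩, hh, hl⟩ := hP
            refine ⟨⟨hne, ?_, ?_⟩, hh, hl⟩
            · intro u hu
              exact vtxB u (hVp u hu) (fun h => hpaP (h ▸ hu)) (fun h => hpbP (h ▸ hu))
            · exact PickAux.chain'_mono_mem hch (fun u hu w hw hr =>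
                arcB u w hr (fun h => hpaP (h ▸ hu)) (fun h => hpaP (h ▸ hw))
                  (fun h => hpbP (h ▸ hu)) (fun h => hpbP (h ▸ hw)))
          exact hv x (by rw [hX']; exact hx) P (by rw [hroot]; exact hQ)
    rw [hroot]; exact hrec v key
end

section
/- Let N be a rooted binary phylogenetic network on X with |X| ≥ 3, and let a, b ∈ X be distinct. Then {a, b} is a cherry of N if and only if for every 3-element subset A of X containing a and b, the set {a, b} is a cherry of the trinet N_A exhibited by N on A. -/
open scoped Classical

namespace Digraph'

variable {α : Type*} [DecidableEq α]

/-! ### Multiset helpers -/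

private lemma ms_count_add_count_le {β : Type*} [DecidableEq β] {e f : β} (h : e ≠ f)
    (s : Multiset β) : s.count e + s.count f ≤ Multiset.card s := by
  induction s using Multiset.induction_on with
  | empty => simp
  | cons a t ih =>
    rw [Multiset.count_cons, Multiset.count_cons, Multiset.card_cons]
    split_ifs with h1 h2
    · exact absurd (h1.trans h2.symm) h
    all_goals omega

private lemma ms_two_le_card {β : Type*} {x y : β} {s : Multiset β}
    (hxy : x ≠ y) (hx : x ∈ s) (hy : y ∈ s) : 2 ≤ Multiset.card s := by
  obtain ⟨t, rfl⟩ := Multiset.exists_cons_of_mem hx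
  have hy' : y ∈ t := by
    rcases Multiset.mem_cons.1 hy with h | h
    · exact absurd h.symm hxy
    · exact h
  have h1 : 0 < Multiset.card t := Multiset.card_pos.2 (fun h0 => by simp [h0] at hy')
  rw [Multiset.card_cons]; omega

private lemma ms_eq_of_card_one {β : Type*} {s : Multiset β} (h : Multiset.card s = 1)
    {x y : β} (hx : x ∈ s) (hy : y ∈ s) : x = y := by
  obtain ⟨a, rfl⟩ := Multiset.card_eq_one.1 h
  rw [Multiset.mem_singleton] at hx hy
  rw [hx, hy]

private lemma ms_card_two_classify {β : Type*} {s : Multiset β} (h : Multiset.card s = 2)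
    {x y z : β} (hx : x ∈ s) (hy : y ∈ s) (hxy : x ≠ y) (hz : z ∈ s) : z = x ∨ z = y := by
  obtain ⟨a, b, rfl⟩ := Multiset.card_eq_two.1 h
  simp only [Multiset.insert_eq_cons, Multiset.mem_cons, Multiset.mem_singleton] at hx hy hz
  rcases hx with rfl | rfl <;> rcases hy with rfl | rfl <;> rcases hz with rfl | rfl <;> tauto

private lemma ms_count_eq_one {β : Type*} [DecidableEq β] {s : Multiset β}
    (h : Multiset.card s = 2) {x y : β} (hx : x ∈ s) (hy : y ∈ s) (hxy : x ≠ y) :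
    s.count x = 1 := by
  have h1 : 0 < s.count x := Multiset.count_pos.2 hx
  have h2 : 0 < s.count y := Multiset.count_pos.2 hy
  have h3 := ms_count_add_count_le hxy s
  omega

private lemma ms_filter_erase {β : Type*} [DecidableEq β] {p : β → Prop} [DecidablePred p]
    {s : Multiset β} {e : β} (hpe : ¬ p e) : (s.erase e).filter p = s.filter p := by
  by_cases he : e ∈ s
  · conv_rhs => rw [← Multiset.cons_erase he]
    rw [Multiset.filter_cons_of_neg _ hpe]
  · rw [Multiset.erase_of_notMem he]

/-! ### Degree helpers -/

lemma inDeg_pos {G : Digraph' α} {x v : α} (h : (x, v) ∈ G.E) : 1 ≤ G.inDeg v :=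
  Multiset.card_pos.2 (fun h0 => by
    have : (x, v) ∈ G.E.filter (fun e => e.2 = v) := Multiset.mem_filter.2 ⟨h, rfl⟩
    simp [h0] at this)

lemma outDeg_pos {G : Digraph' α} {v x : α} (h : (v, x) ∈ G.E) : 1 ≤ G.outDeg v :=
  Multiset.card_pos.2 (fun h0 => by
    have : (v, x) ∈ G.E.filter (fun e => e.1 = v) := Multiset.mem_filter.2 ⟨h, rfl⟩
    simp [h0] at this)

lemma no_out_arc {G : Digraph' α} {v x : α} (h0 : G.outDeg v = 0) (h : (v, x) ∈ G.E) : False := by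
  have := outDeg_pos h; omega

lemma count_le_inDeg (G : Digraph' α) (x v : α) : G.E.count (x, v) ≤ G.inDeg v := by
  calc G.E.count (x, v) = (G.E.filter (fun e => e.2 = v)).count (x, v) :=
        (Multiset.count_filter_of_pos (p := fun e : α × α => e.2 = v) rfl).symm
    _ ≤ G.inDeg v := Multiset.count_le_card _ _

lemma count_le_outDeg (G : Digraph' α) (v x : α) : G.E.count (v, x) ≤ G.outDeg v := by
  calc G.E.count (v, x) = (G.E.filter (fun e => e.1 = v)).count (v, x) :=
        (Multiset.count_filter_of_pos (p := fun e : α × α => e.1 = v) rfl).symm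
    _ ≤ G.outDeg v := Multiset.count_le_card _ _

lemma inDeg_unique {G : Digraph' α} {v x y : α} (h1 : G.inDeg v = 1)
    (hx : (x, v) ∈ G.E) (hy : (y, v) ∈ G.E) : x = y := by
  have := ms_eq_of_card_one h1 (Multiset.mem_filter.2 ⟨hx, rfl⟩)
    (Multiset.mem_filter.2 ⟨hy, rfl⟩)
  exact congrArg Prod.fst this

lemma outDeg_unique {G : Digraph' α} {v x y : α} (h1 : G.outDeg v = 1)
    (hx : (v, x) ∈ G.E) (hy : (v, y) ∈ G.E) : x = y := by
  have := ms_eq_of_card_one h1 (Multiset.mem_filter.2 ⟨hx, rfl⟩)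
    (Multiset.mem_filter.2 ⟨hy, rfl⟩)
  exact congrArg Prod.snd this

lemma out2_classify {G : Digraph' α} {u x y z : α} (h2 : G.outDeg u = 2)
    (hx : (u, x) ∈ G.E) (hy : (u, y) ∈ G.E) (hxy : x ≠ y) (hz : (u, z) ∈ G.E) :
    z = x ∨ z = y := by
  have := ms_card_two_classify h2 (Multiset.mem_filter.2 ⟨hx, rfl⟩)
    (Multiset.mem_filter.2 ⟨hy, rfl⟩) (fun h => hxy (congrArg Prod.snd h))
    (Multiset.mem_filter.2 ⟨hz, rfl⟩)
  rcases this with h | h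
  · exact Or.inl (congrArg Prod.snd h)
  · exact Or.inr (congrArg Prod.snd h)

lemma in2_classify {G : Digraph' α} {u x y z : α} (h2 : G.inDeg u = 2)
    (hx : (x, u) ∈ G.E) (hy : (y, u) ∈ G.E) (hxy : x ≠ y) (hz : (z, u) ∈ G.E) :
    z = x ∨ z = y := by
  have := ms_card_two_classify h2 (Multiset.mem_filter.2 ⟨hx, rfl⟩)
    (Multiset.mem_filter.2 ⟨hy, rfl⟩) (fun h => hxy (congrArg Prod.fst h))
    (Multiset.mem_filter.2 ⟨hz, rfl⟩)
  rcases this with h | h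
  · exact Or.inl (congrArg Prod.fst h)
  · exact Or.inr (congrArg Prod.fst h)

lemma out2_count_one {G : Digraph' α} {u x y : α} (h2 : G.outDeg u = 2)
    (hx : (u, x) ∈ G.E) (hy : (u, y) ∈ G.E) (hxy : x ≠ y) : G.E.count (u, x) = 1 := by
  have := ms_count_eq_one h2 (Multiset.mem_filter.2 ⟨hx, rfl⟩)
    (Multiset.mem_filter.2 ⟨hy, rfl⟩) (fun h => hxy (congrArg Prod.snd h))
  calc G.E.count (u, x) = (G.E.filter (fun e => e.1 = u)).count (u, x) :=
        (Multiset.count_filter_of_pos (p := fun e : α × α => e.1 = u) rfl).symm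
    _ = 1 := this

set_option linter.unusedSectionVars false

/-! ### Walk API -/

lemma reaches_refl {G : Digraph' α} {v : α} (hv : v ∈ G.V) : G.Reaches v v :=
  ⟨[v], ⟨List.cons_ne_nil _ _, by simpa using hv, List.isChain_singleton v⟩, rfl, rfl⟩

lemma pathFrom_append {G : Digraph' α} {u v w : α} {p q : List α}
    (h1 : G.PathFrom u v p) (h2 : G.PathFrom v w q) : G.PathFrom u w (p ++ q.tail) := by
  obtain ⟨⟨hp0, hpV, hpC⟩, hph, hpl⟩ := h1
  obtain ⟨⟨hq0, hqV, hqC⟩, hqh, hql⟩ := h2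
  cases q with
  | nil => exact absurd rfl hq0
  | cons x t =>
    have hx : x = v := by simpa using hqh
    subst hx
    cases t with
    | nil =>
      have hw : x = w := by simpa using hql
      subst hw
      simpa using ⟨⟨hp0, hpV, hpC⟩, hph, hpl⟩
    | cons y t' =>
      refine ⟨⟨by simp [hp0], ?_, ?_⟩, ?_, ?_⟩
      · intro z hz
        rcases List.mem_append.1 hz with h | h
        · exact hpV z h
        · exact hqV z (List.mem_cons_of_mem _ h)
      · refine List.isChain_append.2 ⟨hpC, (List.isChain_cons_cons.1 hqC).2, ?_⟩
        intro a ha b hb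
        have ha' : a = x := by rw [hpl] at ha; simpa using ha.symm
        have hb' : b = y := by simpa using hb.symm
        subst ha'; subst hb'
        exact (List.isChain_cons_cons.1 hqC).1
      · rw [List.head?_append_of_ne_nil _ hp0]; exact hph
      · simp only [List.tail_cons]
        rw [List.getLast?_append_of_ne_nil _ (by simp : (y :: t') ≠ [])]
        rw [List.getLast?_cons_cons] at hql; exact hql

lemma Reaches.trans {G : Digraph' α} {u v w : α} (h1 : G.Reaches u v) (h2 : G.Reaches v w) :
    G.Reaches u w := by
  obtain ⟨p, hp⟩ := h1; obtain ⟨q, hq⟩ := h2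
  exact ⟨_, pathFrom_append hp hq⟩

lemma reaches_arc {G : Digraph' α} {x y : α} (h : (x, y) ∈ G.E) (hx : x ∈ G.V) (hy : y ∈ G.V) :
    G.Reaches x y :=
  ⟨[x, y], ⟨by simp, by intro z hz; rcases List.mem_cons.1 hz with rfl | hz <;>
      simp_all, List.isChain_pair.2 h⟩, rfl, by simp⟩

lemma Reaches.mem_left {G : Digraph' α} {u v : α} (h : G.Reaches u v) : u ∈ G.V := by
  obtain ⟨p, ⟨_, hV, _⟩, hh, _⟩ := h
  exact hV u (List.mem_of_mem_head? (by rw [hh]; rfl))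

lemma Reaches.mem_right {G : Digraph' α} {u v : α} (h : G.Reaches u v) : v ∈ G.V := by
  obtain ⟨p, ⟨_, hV, _⟩, _, hl⟩ := h
  exact hV v (List.mem_of_mem_getLast? (by rw [hl]; rfl))

lemma reaches_last_of_mem {G : Digraph' α} :
    ∀ {p : List α}, G.IsPath p → ∀ {x u : α}, p.getLast? = some x → u ∈ p → G.Reaches u x := by
  intro p
  induction p with
  | nil => intro h; exact absurd rfl h.1
  | cons v t ih =>
    intro hp x u hl hu
    rcases List.mem_cons.1 hu with rfl | hu
    · exact ⟨u :: t, hp, rfl, hl⟩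
    · have ht : t ≠ [] := List.ne_nil_of_mem hu
      have hp' : G.IsPath t :=
        ⟨ht, fun z hz => hp.2.1 z (List.mem_cons_of_mem _ hz), hp.2.2.tail⟩
      cases t with
      | nil => exact absurd rfl ht
      | cons y t' =>
        rw [List.getLast?_cons_cons] at hl
        exact ih hp' hl hu

lemma head_reaches_of_mem {G : Digraph' α} :
    ∀ {p : List α}, G.IsPath p → ∀ {h0 u : α}, p.head? = some h0 → u ∈ p → G.Reaches h0 u := by
  intro p
  induction p with
  | nil => intro h; exact absurd rfl h.1
  | cons v t ih =>
    intro hp h0 u hh hu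
    have hv : h0 = v := by simpa using hh.symm
    subst hv
    rcases List.mem_cons.1 hu with rfl | hu
    · exact reaches_refl (hp.2.1 u (by simp))
    · have ht : t ≠ [] := List.ne_nil_of_mem hu
      cases t with
      | nil => exact absurd rfl ht
      | cons y t' =>
        have harc : (h0, y) ∈ G.E := (List.isChain_cons_cons.1 hp.2.2).1
        have hp' : G.IsPath (y :: t') :=
          ⟨by simp, fun z hz => hp.2.1 z (List.mem_cons_of_mem _ hz), hp.2.2.tail⟩
        have h1 : G.Reaches y u := ih hp' rfl hu
        exact (reaches_arc harc (hp.2.1 h0 (by simp)) (hp.2.1 y (by simp))).trans h1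

lemma exists_first_arc {G : Digraph' α} {u v : α} {p : List α}
    (h : G.PathFrom u v p) (hne : u ≠ v) : ∃ y, (u, y) ∈ G.E ∧ y ∈ p := by
  obtain ⟨⟨h0, hV, hC⟩, hh, hl⟩ := h
  cases p with
  | nil => exact absurd rfl h0
  | cons x t =>
    have hx : x = u := by simpa using hh
    subst hx
    cases t with
    | nil => exact absurd (by simpa using hl) hne
    | cons y t' =>
      exact ⟨y, (List.isChain_cons_cons.1 hC).1, by simp⟩

lemma exists_last_arc_aux {G : Digraph' α} :
    ∀ {p : List α}, G.IsPath p → ∀ {x : α}, p.getLast? = some x → 2 ≤ p.length →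
      ∀ {u : α}, p.head? = some u → ∃ y, (y, x) ∈ G.E ∧ G.Reaches u y := by
  intro p
  induction p with
  | nil => intro h; exact absurd rfl h.1
  | cons v t ih =>
    intro hp x hl hlen u hh
    have hu : u = v := by simpa using hh.symm
    subst hu
    cases t with
    | nil => simp at hlen
    | cons y t' =>
      cases t' with
      | nil =>
        have hx : x = y := by simpa using hl.symm
        subst hx
        exact ⟨u, (List.isChain_cons_cons.1 hp.2.2).1, reaches_refl (hp.2.1 u (by simp))⟩
      | cons z t'' =>
        have hp' : G.IsPath (y :: z :: t'') :=
          ⟨by simp, fun w hw => hp.2.1 w (List.mem_cons_of_mem _ hw), hp.2.2.tail⟩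
        rw [List.getLast?_cons_cons] at hl
        obtain ⟨y0, hy0, hry⟩ := ih hp' hl (by simp) rfl
        have harc : (u, y) ∈ G.E := (List.isChain_cons_cons.1 hp.2.2).1
        exact ⟨y0, hy0, (reaches_arc harc (hp.2.1 u (by simp)) (hp.2.1 y (by simp))).trans hry⟩

lemma exists_last_arc {G : Digraph' α} {u x : α} {p : List α}
    (h : G.PathFrom u x p) (hne : u ≠ x) : ∃ y, (y, x) ∈ G.E ∧ G.Reaches u y := by
  obtain ⟨hp, hh, hl⟩ := h
  cases p with
  | nil => exact absurd rfl hp.1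
  | cons v t =>
    cases t with
    | nil =>
      have h1 : u = v := by simpa using hh.symm
      have h2 : x = v := by simpa using hl.symm
      exact absurd (h1.trans h2.symm) hne
    | cons y t' => exact exists_last_arc_aux hp hl (by simp) hh

lemma reaches_of_out_zero {G : Digraph' α} {v x : α} (h0 : G.outDeg v = 0)
    (h : G.Reaches v x) : x = v := by
  obtain ⟨p, ⟨hp0, hpV, hpC⟩, hh, hl⟩ := h
  cases p with
  | nil => exact absurd rfl hp0
  | cons w t =>
    have hw : w = v := by simpa using hh
    subst hw
    cases t with
    | nil => simpa using hl.symm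
    | cons y t' => exact absurd (List.isChain_cons_cons.1 hpC).1 (fun h => no_out_arc h0 h)

lemma reaches_antisymm {G : Digraph' α} (hacy : G.Acyclic) {u v : α}
    (h1 : G.Reaches u v) (h2 : G.Reaches v u) : u = v := by
  by_contra hne
  obtain ⟨p, hp⟩ := h1
  obtain ⟨y, hy, hyp⟩ := exists_first_arc hp hne
  have h3 : G.Reaches y v := reaches_last_of_mem hp.1 hp.2.2 hyp
  exact hacy (u, y) hy (h3.trans h2)

lemma pathFrom_cons {G : Digraph' α} {x y z : α} {q : List α}
    (hxy : (x, y) ∈ G.E) (hx : x ∈ G.V) (h : G.PathFrom y z q) :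
    G.PathFrom x z (x :: q) := by
  obtain ⟨⟨h0, hV, hC⟩, hh, hl⟩ := h
  cases q with
  | nil => exact absurd rfl h0
  | cons w t =>
    have hw : w = y := by simpa using hh
    subst hw
    refine ⟨⟨by simp, ?_, List.isChain_cons_cons.2 ⟨hxy, hC⟩⟩, rfl, ?_⟩
    · intro a ha
      rcases List.mem_cons.1 ha with rfl | ha
      · exact hx
      · exact hV a ha
    · rw [List.getLast?_cons_cons]; exact hl

/-! ### Chain helpers -/

private lemma chain'_imp_mem {β : Type*} {R S : β → β → Prop} :
    ∀ {l : List β}, (∀ x ∈ l, ∀ y ∈ l, R x y → S x y) → l.Chain' R → l.Chain' S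
  | [], _, _ => List.isChain_nil
  | [x], _, _ => List.isChain_singleton x
  | x :: y :: t, h, hc => by
    simp only [List.Chain', List.isChain_cons_cons] at hc ⊢
    exact ⟨h x (by simp) y (by simp) hc.1,
      chain'_imp_mem (fun a ha b hb => h a (List.mem_cons_of_mem _ ha)
        b (List.mem_cons_of_mem _ hb)) hc.2⟩

private lemma chain'_succ {β : Type*} {R : β → β → Prop} :
    ∀ {l : List β} {t : β}, List.Chain' R (l ++ [t]) → ∀ x ∈ l, ∃ y, R x y ∧ (y ∈ l ∨ y = t)
  | [], _, _, x, hx => absurd hx List.not_mem_nil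
  | y :: l', t, h, x, hx => by
    rcases List.mem_cons.1 hx with rfl | hx
    · cases l' with
      | nil => exact ⟨t, (List.isChain_cons_cons.1 h).1, Or.inr rfl⟩
      | cons z l'' => exact ⟨z, (List.isChain_cons_cons.1 h).1, Or.inl (by simp)⟩
    · obtain ⟨w, hw, hmem⟩ := chain'_succ (List.IsChain.tail h) x hx
      exact ⟨w, hw, hmem.imp (fun h' => List.mem_cons_of_mem _ h') id⟩

private lemma chain'_pred_strong {β : Type*} {R : β → β → Prop} :
    ∀ {l : List β} {u t : β}, List.Chain' R (u :: (l ++ [t])) → ∀ x ∈ l,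
      ∃ pv, R pv x ∧ (pv ∈ l ∨ (pv = u ∧ l.headD t = x))
  | [], _, _, _, x, hx => absurd hx List.not_mem_nil
  | y :: l', u, t, h, x, hx => by
    rcases List.mem_cons.1 hx with rfl | hx
    · exact ⟨u, (List.isChain_cons_cons.1 h).1, Or.inr ⟨rfl, rfl⟩⟩
    · obtain ⟨pv, hpv, hc⟩ := chain'_pred_strong (List.IsChain.tail h) x hx
      rcases hc with h' | ⟨rfl, h2⟩
      · exact ⟨pv, hpv, Or.inl (List.mem_cons_of_mem _ h')⟩
      · exact ⟨pv, hpv, Or.inl (by simp [← h2])⟩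

private lemma chain'_last_arc {β : Type*} {R : β → β → Prop} :
    ∀ {l : List β} {t : β}, List.Chain' R (l ++ [t]) → ∀ {y}, l.getLast? = some y → R y t
  | [], _, _, y, hy => by simp at hy
  | [z], t, h, y, hy => by
    have : z = y := by simpa using hy
    subst this
    exact (List.isChain_cons_cons.1 h).1
  | z :: z' :: l', t, h, y, hy => by
    rw [List.getLast?_cons_cons] at hy
    exact chain'_last_arc (List.IsChain.tail h) hy

private lemma chain'_head_arc {β : Type*} {R : β → β → Prop} {x : β} {l : List β}
    (h : List.Chain' R (x :: l)) {y : β} (hy : l.head? = some y) : R x y := by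
  cases l with
  | nil => simp at hy
  | cons z t =>
    have : z = y := by simpa using hy
    subst this
    exact (List.isChain_cons_cons.1 h).1

private lemma chain'_snoc {β : Type*} {R : β → β → Prop} {l : List β} {x y : β}
    (h : List.Chain' R l) (hl : l.getLast? = some x) (hxy : R x y) :
    List.Chain' R (l ++ [y]) := by
  refine List.isChain_append.2 ⟨h, List.isChain_singleton y, ?_⟩
  intro a ha b hb
  have ha' : a = x := by rw [hl] at ha; simpa using ha.symm
  have hb' : b = y := by simpa using hb.symm
  subst ha'; subst hb'
  exact hxy

private lemma chain'_suffix {β : Type*} {R : β → β → Prop} :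
    ∀ {l : List β} {t : β}, List.Chain' R (l ++ [t]) → ∀ {v : β}, v ∈ l →
      ∃ q : List β, q ≠ [] ∧ q.head? = some v ∧ q.getLast? = some t ∧ List.Chain' R q ∧
        (∀ z ∈ q, z ∈ l ∨ z = t)
  | [], _, _, v, hv => absurd hv List.not_mem_nil
  | y :: l', t, h, v, hv => by
    rcases List.mem_cons.1 hv with rfl | hv
    · refine ⟨v :: (l' ++ [t]), by simp, rfl, ?_, h, ?_⟩
      · rw [← List.cons_append, List.getLast?_append_of_ne_nil _ (by simp)]
        simp
      · intro z hz
        rcases List.mem_cons.1 hz with rfl | hz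
        · exact Or.inl (by simp)
        · rcases List.mem_append.1 hz with h' | h'
          · exact Or.inl (List.mem_cons_of_mem _ h')
          · exact Or.inr (by simpa using h')
    · obtain ⟨q, hq0, hqh, hql, hqC, hqm⟩ := chain'_suffix (List.IsChain.tail h) hv
      exact ⟨q, hq0, hqh, hql, hqC, fun z hz =>
        (hqm z hz).imp (fun h' => List.mem_cons_of_mem _ h') id⟩

private lemma headD_append {β : Type*} (l : List β) (x d : β) :
    (l ++ [x]).headD d = l.headD x := by cases l <;> simp

private lemma head?_append_single {β : Type*} (l : List β) (x : β) :
    (l ++ [x]).head? = some (l.headD x) := by cases l <;> simp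

/-! ### zip and pathGraph lemmas -/

private lemma mem_zip_append :
    ∀ (p : List α) {q : List α} {u v : α}, p.getLast? = some u → q.head? = some v →
      (u, v) ∈ (p ++ q).zip (p ++ q).tail
  | [], q, u, v, hu, hv => by simp at hu
  | [x], q, u, v, hu, hv => by
    cases q with
    | nil => simp at hv
    | cons y t =>
      have hux : x = u := by simpa using hu
      have hvy : y = v := by simpa using hv
      subst hux; subst hvy
      simp [List.zip_cons_cons]
  | x :: x' :: p'', q, u, v, hu, hv => by
    rw [List.getLast?_cons_cons] at hu
    have ih := mem_zip_append (x' :: p'') hu hv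
    simp only [List.cons_append, List.tail_cons, List.zip_cons_cons] at ih ⊢
    exact List.mem_cons_of_mem _ ih

lemma mem_pathGraph_arc {G : Digraph' α} {r u v x : α} {A : Finset α}
    (hru : G.Reaches r u) (huv : (u, v) ∈ G.E) (hvx : G.Reaches v x) (hxA : x ∈ A) :
    (u, v) ∈ (G.pathGraph r A).E := by
  obtain ⟨p, hp⟩ := hru
  obtain ⟨q, hq⟩ := hvx
  have hzip : (u, v) ∈ (p ++ q).zip (p ++ q).tail := mem_zip_append p hp.2.2 hq.2.1
  have hW : G.PathFrom r x (p ++ q) := by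
    obtain ⟨⟨hp0, hpV, hpC⟩, hph, hpl⟩ := hp
    obtain ⟨⟨hq0, hqV, hqC⟩, hqh, hql⟩ := hq
    refine ⟨⟨by simp [hp0], ?_, ?_⟩, ?_, ?_⟩
    · intro z hz
      rcases List.mem_append.1 hz with h | h
      · exact hpV z h
      · exact hqV z h
    · refine List.isChain_append.2 ⟨hpC, hqC, ?_⟩
      intro a ha b hb
      have ha' : a = u := by rw [hpl] at ha; simpa using ha.symm
      have hb' : b = v := by rw [hqh] at hb; simpa using hb.symm
      subst ha'; subst hb'
      exact huv
    · rw [List.head?_append_of_ne_nil _ hp0]; exact hph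
    · rw [List.getLast?_append_of_ne_nil _ hq0]; exact hql
  unfold pathGraph
  exact Multiset.mem_filter.2 ⟨huv, ⟨x, hxA, p ++ q, hW, hzip⟩⟩

lemma pathGraph_E_le (G : Digraph' α) (r : α) (A : Finset α) :
    (G.pathGraph r A).E ≤ G.E := Multiset.filter_le _ _

lemma mem_of_pathGraph {G : Digraph' α} {r : α} {A : Finset α} {e : α × α}
    (h : e ∈ (G.pathGraph r A).E) : e ∈ G.E :=
  Multiset.mem_of_le (pathGraph_E_le G r A) h

lemma pathGraph_inDeg_le (G : Digraph' α) (r : α) (A : Finset α) (v : α) :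
    (G.pathGraph r A).inDeg v ≤ G.inDeg v :=
  Multiset.card_le_card (Multiset.filter_le_filter _ (pathGraph_E_le G r A))

lemma pathGraph_outDeg_le (G : Digraph' α) (r : α) (A : Finset α) (v : α) :
    (G.pathGraph r A).outDeg v ≤ G.outDeg v :=
  Multiset.card_le_card (Multiset.filter_le_filter _ (pathGraph_E_le G r A))

private lemma chain'_imp_tail {β : Type*} {R S : β → β → Prop} :
    ∀ {l : List β}, (∀ x ∈ l, ∀ y ∈ l.tail, R x y → S x y) → l.Chain' R → l.Chain' S
  | [], _, _ => List.isChain_nil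
  | [x], _, _ => List.isChain_singleton x
  | x :: y :: t, h, hc => by
    simp only [List.Chain', List.isChain_cons_cons] at hc ⊢
    exact ⟨h x (by simp) y (by simp) hc.1,
      chain'_imp_tail (fun a ha b hb => h a (List.mem_cons_of_mem _ ha)
        b (List.mem_cons_of_mem _ hb)) hc.2⟩

/-! ### Suppression and deletion lemmas -/

private lemma card_filter_split {s : Multiset (α × α)} (q g : α × α → Prop)
    [DecidablePred q] [DecidablePred g]
    [DecidablePred (fun e => q e ∧ g e)] [DecidablePred (fun e => q e ∧ ¬ g e)] :
    Multiset.card (s.filter q) =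
      Multiset.card (s.filter (fun e => q e ∧ g e)) +
      Multiset.card (s.filter (fun e => q e ∧ ¬ g e)) := by
  conv_lhs => rw [← Multiset.filter_add_not g (s.filter q)]
  rw [Multiset.card_add, Multiset.filter_filter, Multiset.filter_filter]
  congr 1
  · exact congrArg _ (Multiset.filter_congr (fun x _ => and_comm))
  · exact congrArg _ (Multiset.filter_congr (fun x _ => and_comm))

private lemma card_filter_eq_count {s : Multiset (α × α)} (e : α × α)
    [DecidablePred (fun f : α × α => f = e)] :
    Multiset.card (s.filter (fun f => f = e)) = s.count e := by
  rw [Multiset.count_eq_card_filter_eq]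
  exact congrArg _ (Multiset.filter_congr (fun x _ => eq_comm))

lemma suppress_inDeg {G G' : Digraph' α} {w p c : α}
    (hout : G.outDeg w = 1)
    (hwc : (w, c) ∈ G.E)
    (hE : G'.E = (G.deleteVertex w).E + {(p, c)}) {v : α} (hvw : v ≠ w) :
    G'.inDeg v = G.inDeg v := by
  classical
  have hcount : G.E.count (w, v) = (if c = v then 1 else 0) := by
    split_ifs with h
    · subst h
      have h1 : 0 < G.E.count (w, c) := Multiset.count_pos.2 hwc
      have h2 := count_le_outDeg G w c
      omega
    · exact Multiset.count_eq_zero.2 (fun hmem => h (outDeg_unique hout hwc hmem))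
  have hsplit := card_filter_split (s := G.E) (fun e => e.2 = v) (fun e => e = (w, v))
  have he1 : G.E.filter (fun e => e.2 = v ∧ e = (w, v)) = G.E.filter (fun e => e = (w, v)) :=
    Multiset.filter_congr (fun x _ => ⟨fun h => h.2, fun h => ⟨by rw [h], h⟩⟩)
  have hnew : G'.inDeg v =
      Multiset.card (G.E.filter (fun e => e.2 = v ∧ ¬ e = (w, v))) +
        (if c = v then 1 else 0) := by
    unfold inDeg
    rw [hE]
    unfold deleteVertex
    rw [Multiset.filter_add, Multiset.card_add, Multiset.filter_filter]
    congr 1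
    · refine congrArg _ (Multiset.filter_congr (fun x _ => ?_))
      constructor
      · rintro ⟨h1, h2, h3⟩
        exact ⟨h1, fun hc => h2 (by rw [hc])⟩
      · rintro ⟨h1, h2⟩
        exact ⟨h1, fun hc => h2 (Prod.ext_iff.2 ⟨hc, h1⟩), by rw [h1]; exact hvw⟩
    · rw [Multiset.filter_singleton]
      by_cases h : c = v
      · simp [h]
      · simp [h]
  have hQ : G.inDeg v =
      Multiset.card (G.E.filter (fun e => e.2 = v ∧ ¬ e = (w, v))) + G.E.count (w, v) := by
    unfold inDeg
    rw [hsplit, he1, card_filter_eq_count]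
    omega
  omega

lemma suppress_outDeg {G G' : Digraph' α} {w p c : α}
    (hin : G.inDeg w = 1)
    (hpw : (p, w) ∈ G.E)
    (hE : G'.E = (G.deleteVertex w).E + {(p, c)}) {v : α} (hvw : v ≠ w) :
    G'.outDeg v = G.outDeg v := by
  classical
  have hcount : G.E.count (v, w) = (if p = v then 1 else 0) := by
    split_ifs with h
    · subst h
      have h1 : 0 < G.E.count (p, w) := Multiset.count_pos.2 hpw
      have h2 := count_le_inDeg G p w
      omega
    · exact Multiset.count_eq_zero.2 (fun hmem => h (inDeg_unique hin hpw hmem))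
  have hsplit := card_filter_split (s := G.E) (fun e => e.1 = v) (fun e => e = (v, w))
  have he1 : G.E.filter (fun e => e.1 = v ∧ e = (v, w)) = G.E.filter (fun e => e = (v, w)) :=
    Multiset.filter_congr (fun x _ => ⟨fun h => h.2, fun h => ⟨by rw [h], h⟩⟩)
  have hnew : G'.outDeg v =
      Multiset.card (G.E.filter (fun e => e.1 = v ∧ ¬ e = (v, w))) +
        (if p = v then 1 else 0) := by
    unfold outDeg
    rw [hE]
    unfold deleteVertex
    rw [Multiset.filter_add, Multiset.card_add, Multiset.filter_filter]
    congr 1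
    · refine congrArg _ (Multiset.filter_congr (fun x _ => ?_))
      constructor
      · rintro ⟨h1, h2, h3⟩
        exact ⟨h1, fun hc => h3 (by rw [hc])⟩
      · rintro ⟨h1, h2⟩
        exact ⟨h1, by rw [h1]; exact hvw, fun hc => h2 (Prod.ext_iff.2 ⟨h1, hc⟩)⟩
    · rw [Multiset.filter_singleton]
      by_cases h : p = v
      · simp [h]
      · simp [h]
  have hQ : G.outDeg v =
      Multiset.card (G.E.filter (fun e => e.1 = v ∧ ¬ e = (v, w))) + G.E.count (v, w) := by
    unfold outDeg
    rw [hsplit, he1, card_filter_eq_count]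
    omega
  omega

lemma suppress_mem {G G' : Digraph' α} {w p c : α}
    (hE : G'.E = (G.deleteVertex w).E + {(p, c)}) {e : α × α}
    (he : e ∈ G.E) (h1 : e.1 ≠ w) (h2 : e.2 ≠ w) : e ∈ G'.E := by
  rw [hE]
  exact Multiset.mem_add.2 (Or.inl (Multiset.mem_filter.2 ⟨he, h1, h2⟩))

lemma suppress_new_mem {G G' : Digraph' α} {w p c : α}
    (hE : G'.E = (G.deleteVertex w).E + {(p, c)}) : (p, c) ∈ G'.E := by
  rw [hE]
  exact Multiset.mem_add.2 (Or.inr (Multiset.mem_singleton.2 rfl))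

lemma suppress_mem_cases {G G' : Digraph' α} {w p c : α}
    (hE : G'.E = (G.deleteVertex w).E + {(p, c)}) {e : α × α} (he : e ∈ G'.E) :
    (e ∈ G.E ∧ e.1 ≠ w ∧ e.2 ≠ w) ∨ e = (p, c) := by
  rw [hE] at he
  rcases Multiset.mem_add.1 he with h | h
  · obtain ⟨h1, h2⟩ := Multiset.mem_filter.1 h
    exact Or.inl ⟨h1, h2⟩
  · exact Or.inr (Multiset.mem_singleton.1 h)

lemma suppress_card {G G' : Digraph' α} {w p c : α}
    (hpw : (p, w) ∈ G.E) (hwc : (w, c) ∈ G.E) (hpne : p ≠ w)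
    (hE : G'.E = (G.deleteVertex w).E + {(p, c)}) :
    Multiset.card G'.E < Multiset.card G.E := by
  classical
  have h1 : Multiset.card G'.E =
      Multiset.card (G.E.filter (fun e => e.1 ≠ w ∧ e.2 ≠ w)) + 1 := by
    rw [hE]; unfold deleteVertex
    rw [Multiset.card_add, Multiset.card_singleton]
  have h2 := card_filter_split (s := G.E) (fun _ => True) (fun e => e.1 ≠ w ∧ e.2 ≠ w)
  have h3 : G.E.filter (fun _ => True) = G.E := Multiset.filter_eq_self.2 (fun _ _ => trivial)
  have h4 : G.E.filter (fun e => True ∧ (e.1 ≠ w ∧ e.2 ≠ w)) =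
      G.E.filter (fun e => e.1 ≠ w ∧ e.2 ≠ w) :=
    Multiset.filter_congr (fun x _ => by tauto)
  have h5 : 2 ≤ Multiset.card (G.E.filter (fun e => True ∧ ¬ (e.1 ≠ w ∧ e.2 ≠ w))) := by
    refine ms_two_le_card (x := (p, w)) (y := (w, c)) ?_ ?_ ?_
    · exact fun h => hpne (congrArg Prod.fst h)
    · exact Multiset.mem_filter.2 ⟨hpw, by tauto⟩
    · exact Multiset.mem_filter.2 ⟨hwc, by tauto⟩
  rw [h3, h4] at h2
  omega

lemma erase_mem {s : Multiset (α × α)} {e f : α × α} (hf : f ∈ s) (hne : f ≠ e) :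
    f ∈ s.erase e := (Multiset.mem_erase_of_ne hne).2 hf

lemma erase_inDeg {G : Digraph' α} {e : α × α} {v : α} (hev : e.2 ≠ v) :
    Multiset.card ((G.E.erase e).filter (fun f => f.2 = v)) = G.inDeg v := by
  classical
  unfold inDeg
  rw [ms_filter_erase (p := fun f : α × α => f.2 = v) (e := e) hev]

lemma erase_outDeg {G : Digraph' α} {e : α × α} {v : α} (hev : e.1 ≠ v) :
    Multiset.card ((G.E.erase e).filter (fun f => f.1 = v)) = G.outDeg v := by
  classical
  unfold outDeg
  rw [ms_filter_erase (p := fun f : α × α => f.1 = v) (e := e) hev]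

/-! ### Lowest stable ancestors and reaching leaves -/

lemma exists_lsa (G : Digraph' α) (hacy : G.Acyclic) (root : α) (hrootV : root ∈ G.V)
    (A : Finset α) : ∃ r, G.IsLowestSA root A r := by
  classical
  set S := G.V.filter (fun v => G.StableAncestor root A v) with hS
  have hroot : root ∈ S := Finset.mem_filter.2 ⟨hrootV,
    fun x _ pth hp => List.mem_of_mem_head? (by rw [hp.2.1]; rfl)⟩
  obtain ⟨r, hrS, hmin⟩ := Finset.exists_min_image S
    (fun v => (G.V.filter (fun y => G.Reaches v y)).card) ⟨root, hroot⟩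
  refine ⟨r, (Finset.mem_filter.1 hrS).2, ?_⟩
  intro v hv hne hrv
  have hvV : v ∈ G.V := hrv.mem_right
  have hvS : v ∈ S := Finset.mem_filter.2 ⟨hvV, hv⟩
  have hrV : r ∈ G.V := (Finset.mem_filter.1 hrS).1
  have hsub : G.V.filter (fun y => G.Reaches v y) ⊆ G.V.filter (fun y => G.Reaches r y) := by
    intro y hy
    obtain ⟨hy1, hy2⟩ := Finset.mem_filter.1 hy
    exact Finset.mem_filter.2 ⟨hy1, hrv.trans hy2⟩
  have hnm : r ∉ G.V.filter (fun y => G.Reaches v y) := by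
    intro hmem
    exact hne (reaches_antisymm hacy (Finset.mem_filter.1 hmem).2 hrv)
  have hrm : r ∈ G.V.filter (fun y => G.Reaches r y) :=
    Finset.mem_filter.2 ⟨hrV, reaches_refl hrV⟩
  have hlt : (G.V.filter (fun y => G.Reaches v y)).card <
      (G.V.filter (fun y => G.Reaches r y)).card := by
    refine Finset.card_lt_card (Finset.ssubset_iff_subset_ne.2 ⟨hsub, fun heq => ?_⟩)
    rw [heq] at hnm
    exact hnm hrm
  exact absurd (hmin v hvS) (by omega)

lemma reach_leaf (G : Digraph' α) (hacy : G.Acyclic) (X : Finset α)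
    (hwf : ∀ e ∈ G.E, e.1 ∈ G.V ∧ e.2 ∈ G.V)
    (hleaf : ∀ v ∈ G.V, G.outDeg v = 0 → v ∈ X) :
    ∀ v ∈ G.V, ∃ x ∈ X, G.Reaches v x := by
  classical
  have key : ∀ n : ℕ, ∀ v ∈ G.V, (G.V.filter (fun y => G.Reaches v y)).card ≤ n →
      ∃ x ∈ X, G.Reaches v x := by
    intro n
    induction n with
    | zero =>
      intro v hv hc
      have h1 : v ∈ G.V.filter (fun y => G.Reaches v y) :=
        Finset.mem_filter.2 ⟨hv, reaches_refl hv⟩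
      have := Finset.card_pos.2 ⟨v, h1⟩
      omega
    | succ n ih =>
      intro v hv hc
      by_cases h0 : G.outDeg v = 0
      · exact ⟨v, hleaf v hv h0, reaches_refl hv⟩
      · obtain ⟨e, he⟩ := Multiset.exists_mem_of_ne_zero
          (s := G.E.filter (fun e => e.1 = v))
          (fun h => h0 (by unfold outDeg; rw [h]; rfl))
        obtain ⟨heE, he1⟩ := Multiset.mem_filter.1 he
        have harc : (v, e.2) ∈ G.E := by rw [← he1]; exact heE
        have hw : e.2 ∈ G.V := (hwf _ heE).2
        have hvw : G.Reaches v e.2 := reaches_arc harc hv hw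
        have hnr : ¬ G.Reaches e.2 v := by
          have := hacy e heE
          rwa [he1] at this
        have hsub : G.V.filter (fun y => G.Reaches e.2 y) ⊆
            G.V.filter (fun y => G.Reaches v y) := by
          intro y hy
          obtain ⟨hy1, hy2⟩ := Finset.mem_filter.1 hy
          exact Finset.mem_filter.2 ⟨hy1, hvw.trans hy2⟩
        have hnm : v ∉ G.V.filter (fun y => G.Reaches e.2 y) := by
          intro hmem
          exact hnr (Finset.mem_filter.1 hmem).2
        have hvm : v ∈ G.V.filter (fun y => G.Reaches v y) :=
          Finset.mem_filter.2 ⟨hv, reaches_refl hv⟩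
        have hlt : (G.V.filter (fun y => G.Reaches e.2 y)).card <
            (G.V.filter (fun y => G.Reaches v y)).card := by
          refine Finset.card_lt_card (Finset.ssubset_iff_subset_ne.2 ⟨hsub, fun heq => ?_⟩)
          rw [heq] at hnm
          exact hnm hvm
        obtain ⟨x, hx1, hx2⟩ := ih e.2 hw (by omega)
        exact ⟨x, hx1, hvw.trans hx2⟩
  intro v hv
  exact key _ v hv le_rfl

/-! ### PhyloNet structure facts -/

lemma pn_nondegen (N : PhyloNet α) (hX : 3 ≤ N.X.card) :
    N.G.inDeg N.root = 0 ∧ N.G.outDeg N.root = 2 ∧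
    (∀ x ∈ N.X, x ∈ N.G.V ∧ N.G.inDeg x = 1 ∧ N.G.outDeg x = 0) ∧
    (∀ v ∈ N.G.V, N.G.outDeg v = 0 → v ∈ N.X) ∧
    (∀ v ∈ N.G.V, v ≠ N.root → v ∉ N.X →
      (N.G.inDeg v = 1 ∧ N.G.outDeg v = 2) ∨ (N.G.inDeg v = 2 ∧ N.G.outDeg v = 1)) := by
  have hde : (fun (a b : α) => Classical.propDecidable (a = b)) = ‹DecidableEq α› :=
    Subsingleton.elim _ _
  rcases N.binary with ⟨h1, h2, h3⟩ | h
  · rw [h3, Finset.card_singleton] at hX; omega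
  · rw [hde] at h
    exact h

lemma pn_no_self_loop (N : PhyloNet α) {x : α} (h : (x, x) ∈ N.G.E) : False :=
  N.acyclic (x, x) h (reaches_refl ((N.wf _ h).1))

lemma lsa_reach (N : PhyloNet α) {A : Finset α} {r : α}
    (hSA : N.G.StableAncestor N.root A r) {x : α} (hx : x ∈ A) (hxV : x ∈ N.G.V) :
    N.G.Reaches r x := by
  obtain ⟨p, hp⟩ := N.reach x hxV
  exact reaches_last_of_mem hp.1 hp.2.2 (hSA x hx p hp)

lemma lsa_ne (N : PhyloNet α) {A : Finset α} {r : α}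
    (hSA : N.G.StableAncestor N.root A r) {a x : α} (hoa : N.G.outDeg a = 0)
    (hx : x ∈ A) (hxV : x ∈ N.G.V) (hax : x ≠ a) : r ≠ a := by
  intro h; subst h
  obtain ⟨p, hp⟩ := N.reach x hxV
  have h2 : N.G.Reaches r x := reaches_last_of_mem hp.1 hp.2.2 (hSA x hx p hp)
  exact hax (reaches_of_out_zero hoa h2)

lemma parent_arc_pathGraph (N : PhyloNet α) {A : Finset α} {r a pa : α}
    (hSA : N.G.StableAncestor N.root A r) (haA : a ∈ A) (haV : a ∈ N.G.V)
    (hia : N.G.inDeg a = 1) (hpa : (pa, a) ∈ N.G.E) (hra : r ≠ a) :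
    N.G.Reaches r pa ∧ (pa, a) ∈ (N.G.pathGraph r A).E := by
  have hrA : N.G.Reaches r a := lsa_reach N hSA haA haV
  obtain ⟨p, hp⟩ := hrA
  obtain ⟨y, hy, hry⟩ := exists_last_arc hp hra
  have hy' : y = pa := inDeg_unique hia hy hpa
  subst hy'
  exact ⟨hry, mem_pathGraph_arc hry hpa (reaches_refl haV) haA⟩

lemma exists_third (N : PhyloNet α) {A : Finset α} (hA3 : A.card = 3) (a : α) :
    ∃ x ∈ A, x ≠ a := by
  by_contra hcon
  push_neg at hcon
  have h1 : A ⊆ {a} := fun x hx => Finset.mem_singleton.2 (hcon x hx)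
  have h2 := Finset.card_le_card h1
  rw [Finset.card_singleton, hA3] at h2
  omega

/-! ### Forward direction: the cherry survives simplification -/

def PhiInv (a b : α) (G : Digraph' α) : Prop :=
  G.inDeg a = 1 ∧ G.outDeg a = 0 ∧ G.inDeg b = 1 ∧ G.outDeg b = 0 ∧
    ∃ q, (q, a) ∈ G.E ∧ (q, b) ∈ G.E

lemma phi_step {a b : α} (hab : a ≠ b) {G G' : Digraph' α}
    (hstep : SimpStep G G') (hφ : PhiInv a b G) : PhiInv a b G' := by
  obtain ⟨hia, hoa, hib, hob, q, hqa, hqb⟩ := hφ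
  rcases hstep with ⟨w, hin, hout, p, c, hpw, hwc, hV, hE⟩ | ⟨e, hcnt, hV, hE⟩
  · have haw : a ≠ w := fun h => by rw [← h, hoa] at hout; omega
    have hbw : b ≠ w := fun h => by rw [← h, hob] at hout; omega
    have hqw : q ≠ w := by
      intro h
      have h2 : 2 ≤ G.outDeg q := ms_two_le_card (x := (q, a)) (y := (q, b))
        (fun h' => hab (congrArg Prod.snd h'))
        (Multiset.mem_filter.2 ⟨hqa, rfl⟩) (Multiset.mem_filter.2 ⟨hqb, rfl⟩)
      rw [h, hout] at h2
      omega
    refine ⟨?_, ?_, ?_, ?_, q, ?_, ?_⟩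
    · rw [suppress_inDeg hout hwc hE haw]; exact hia
    · rw [suppress_outDeg hin hpw hE haw]; exact hoa
    · rw [suppress_inDeg hout hwc hE hbw]; exact hib
    · rw [suppress_outDeg hin hpw hE hbw]; exact hob
    · exact suppress_mem hE hqa hqw haw
    · exact suppress_mem hE hqb hqw hbw
  · have hmem : e ∈ G.E := Multiset.count_pos.1 (by omega)
    have hea : e ≠ (q, a) := by
      intro h
      rw [h] at hcnt
      have := count_le_inDeg G q a
      omega
    have heb : e ≠ (q, b) := by
      intro h
      rw [h] at hcnt
      have := count_le_inDeg G q b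
      omega
    have hein : e.2 ≠ a := by
      intro h
      have h1 : (e.1, a) ∈ G.E := by rw [← h]; exact hmem
      have h2 : e.1 = q := inDeg_unique hia h1 hqa
      exact hea (Prod.ext_iff.2 ⟨h2, h⟩)
    have heib : e.2 ≠ b := by
      intro h
      have h1 : (e.1, b) ∈ G.E := by rw [← h]; exact hmem
      have h2 : e.1 = q := inDeg_unique hib h1 hqb
      exact heb (Prod.ext_iff.2 ⟨h2, h⟩)
    have heoa : e.1 ≠ a := fun h =>
      no_out_arc hoa (show (a, e.2) ∈ G.E by rw [← h]; exact hmem)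
    have heob : e.1 ≠ b := fun h =>
      no_out_arc hob (show (b, e.2) ∈ G.E by rw [← h]; exact hmem)
    refine ⟨?_, ?_, ?_, ?_, q, ?_, ?_⟩
    · have h1 : G'.inDeg a = G.inDeg a := by unfold inDeg; rw [hE]; exact erase_inDeg hein
      rw [h1]; exact hia
    · have h1 : G'.outDeg a = G.outDeg a := by unfold outDeg; rw [hE]; exact erase_outDeg heoa
      rw [h1]; exact hoa
    · have h1 : G'.inDeg b = G.inDeg b := by unfold inDeg; rw [hE]; exact erase_inDeg heib
      rw [h1]; exact hib
    · have h1 : G'.outDeg b = G.outDeg b := by unfold outDeg; rw [hE]; exact erase_outDeg heob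
      rw [h1]; exact hob
    · rw [hE]; exact erase_mem hqa (fun h => hea h.symm)
    · rw [hE]; exact erase_mem hqb (fun h => heb h.symm)

lemma phi_rtg {a b : α} (hab : a ≠ b) {G H : Digraph' α}
    (h : Relation.ReflTransGen (SimpStep (α := α)) G H) (hφ : PhiInv a b G) : PhiInv a b H := by
  induction h with
  | refl => exact hφ
  | tail h1 h2 ih => exact phi_step hab h2 ih

lemma forward_dir (N : PhyloNet α) (hX : 3 ≤ N.X.card)
    {a b : α} (hab : a ≠ b) (hch : N.Cherry a b) :
    ∀ A : Finset α, A ⊆ N.X → A.card = 3 → a ∈ A → b ∈ A →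
      ∀ H : Digraph' α, N.Exhibits A H → ∃ p, (p, a) ∈ H.E ∧ (p, b) ∈ H.E := by
  intro A hAX hA3 haA hbA H hEx
  obtain ⟨r, hlsa, hfs⟩ := hEx
  obtain ⟨haX, hbX, hab', q, hqa, hqb⟩ := hch
  obtain ⟨hr0, hr2, hleaves, hleafcl, hint⟩ := pn_nondegen N hX
  obtain ⟨haV, hia, hoa⟩ := hleaves a haX
  obtain ⟨hbV, hib, hob⟩ := hleaves b hbX
  obtain ⟨x, hxA, hxa⟩ := exists_third N hA3 a
  obtain ⟨y, hyA, hyb⟩ := exists_third N hA3 b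
  have hra : r ≠ a := lsa_ne N hlsa.1 hoa hxA (hleaves x (hAX hxA)).1 hxa
  obtain ⟨hrq, hqaG⟩ := parent_arc_pathGraph N hlsa.1 haA haV hia hqa hra
  have hqbG : (q, b) ∈ (N.G.pathGraph r A).E :=
    mem_pathGraph_arc hrq hqb (reaches_refl hbV) hbA
  have hφ0 : PhiInv a b (N.G.pathGraph r A) := by
    refine ⟨?_, ?_, ?_, ?_, q, hqaG, hqbG⟩
    · have h1 := pathGraph_inDeg_le N.G r A a
      have h2 := inDeg_pos hqaG
      omega
    · have h1 := pathGraph_outDeg_le N.G r A a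
      omega
    · have h1 := pathGraph_inDeg_le N.G r A b
      have h2 := inDeg_pos hqbG
      omega
    · have h1 := pathGraph_outDeg_le N.G r A b
      omega
  exact (phi_rtg hab' hfs.1 hφ0).2.2.2.2

/-! ### Invariant for the backward direction -/

def ThetaInv (N : PhyloNet α) (a u : α) (L : List α) (GP : α → Prop)
    (G : Digraph' α) : Prop :=
  (∀ e ∈ G.E, e.1 ≠ e.2 ∧ e.1 ∈ N.G.V ∧ e.2 ∈ N.G.V ∧ N.G.Reaches e.1 e.2) ∧
  G.inDeg a = 1 ∧ G.outDeg a = 0 ∧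
  (∀ v ∈ L, G.inDeg v = 2 ∧ G.outDeg v = 1) ∧
  List.Chain' (fun x y => (x, y) ∈ G.E) (u :: (L ++ [a])) ∧
  G.outDeg u = 2 ∧ ∃ s, (u, s) ∈ G.E ∧ GP s

lemma theta_ut0 {N : PhyloNet α} {a u : α} {L : List α} {GP : α → Prop} {G : Digraph' α}
    (hθ : ThetaInv N a u L GP G) : (u, L.headD a) ∈ G.E := by
  obtain ⟨_, _, _, _, hch, _⟩ := hθ
  exact chain'_head_arc hch (head?_append_single L a)

lemma theta_s_ne {N : PhyloNet α} {a u : α} {L : List α} {GP : α → Prop} {G : Digraph' α}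
    (hθ : ThetaInv N a u L GP G)
    (hGPt : ∀ x, GP x → ¬ N.G.Reaches x (L.headD a))
    {s : α} (hs : (u, s) ∈ G.E) (hGPs : GP s) : s ≠ L.headD a := by
  intro h
  have ht0V : L.headD a ∈ N.G.V := (hθ.1 _ (theta_ut0 hθ)).2.2.1
  exact hGPt s hGPs (by rw [h]; exact reaches_refl ht0V)

lemma theta_w_not_chain {N : PhyloNet α} {a u w : α} {L : List α} {GP : α → Prop}
    {G : Digraph' α} (hθ : ThetaInv N a u L GP G)
    (hin : G.inDeg w = 1) (hout : G.outDeg w = 1) : w ∉ (u :: (L ++ [a])) := by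
  obtain ⟨_, hia, hoa, hL, hch, hu2, _⟩ := hθ
  intro hw
  rcases List.mem_cons.1 hw with rfl | hw
  · rw [hout] at hu2; omega
  · rcases List.mem_append.1 hw with hw | hw
    · have h1 := (hL w hw).1
      omega
    · have h1 : w = a := by simpa using hw
      rw [h1] at hout
      omega

lemma theta_step {N : PhyloNet α} {a u : α} {L : List α} {GP : α → Prop}
    (hGPd : ∀ x y, GP x → N.G.Reaches x y → GP y)
    (hGPt : ∀ x, GP x → ¬ N.G.Reaches x (L.headD a))
    {G G' : Digraph' α} (hstep : SimpStep G G') (hθ : ThetaInv N a u L GP G) :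
    ThetaInv N a u L GP G' := by
  obtain ⟨hi0, hia, hoa, hL, hch, hu2, s, hus, hGPs⟩ := hθ
  have hθ' : ThetaInv N a u L GP G := ⟨hi0, hia, hoa, hL, hch, hu2, s, hus, hGPs⟩
  have hut0 : (u, L.headD a) ∈ G.E := theta_ut0 hθ'
  have hst0 : s ≠ L.headD a := theta_s_ne hθ' hGPt hus hGPs
  rcases hstep with ⟨w, hin, hout, p, c, hpw, hwc, hV, hE⟩ | ⟨e, hcnt, hV, hE⟩
  · -- suppression of w
    have hwch : w ∉ (u :: (L ++ [a])) := theta_w_not_chain hθ' hin hout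
    have hwu : u ≠ w := fun h => hwch (by rw [← h]; exact List.mem_cons_self)
    have hwa : a ≠ w := fun h => hwch (by
      rw [← h]
      exact List.mem_cons_of_mem _ (List.mem_append.2 (Or.inr (by simp))))
    have hwL : ∀ v ∈ L, v ≠ w := fun v hv h => hwch (by
      rw [← h]
      exact List.mem_cons_of_mem _ (List.mem_append.2 (Or.inl hv)))
    have hpcV : p ∈ N.G.V ∧ c ∈ N.G.V := ⟨(hi0 _ hpw).2.1, (hi0 _ hwc).2.2.1⟩
    have hreach_pc : N.G.Reaches p c := ((hi0 _ hpw).2.2.2).trans (hi0 _ hwc).2.2.2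
    have hpc_ne : p ≠ c := by
      intro h
      have h1 : N.G.Reaches c w := by rw [← h]; exact (hi0 _ hpw).2.2.2
      exact (hi0 _ hwc).1 (reaches_antisymm N.acyclic (hi0 _ hwc).2.2.2 h1)
    refine ⟨?_, ?_, ?_, ?_, ?_, ?_, ?_⟩
    · intro f hf
      rcases suppress_mem_cases hE hf with ⟨h1, _, _⟩ | rfl
      · exact hi0 f h1
      · exact ⟨hpc_ne, hpcV.1, hpcV.2, hreach_pc⟩
    · rw [suppress_inDeg hout hwc hE hwa]; exact hia
    · rw [suppress_outDeg hin hpw hE hwa]; exact hoa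
    · intro v hv
      rw [suppress_inDeg hout hwc hE (hwL v hv), suppress_outDeg hin hpw hE (hwL v hv)]
      exact hL v hv
    · refine chain'_imp_tail (fun x hx y hy hxy => ?_) hch
      exact suppress_mem hE hxy (fun h => hwch (h ▸ hx))
        (fun h => hwch (h ▸ List.mem_of_mem_tail hy))
    · rw [suppress_outDeg hin hpw hE hwu]; exact hu2
    · by_cases hsw : s = w
      · have hpu : p = u := inDeg_unique hin hpw (hsw ▸ hus)
        refine ⟨c, by rw [← hpu]; exact suppress_new_mem hE,
          hGPd s c hGPs (by rw [hsw]; exact (hi0 _ hwc).2.2.2)⟩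
      · exact ⟨s, suppress_mem hE hus hwu (fun h => hsw h), hGPs⟩
  · -- deletion of a parallel arc e
    have hmem : e ∈ G.E := Multiset.count_pos.1 (by omega)
    have hcu_t0 : G.E.count (u, L.headD a) = 1 := out2_count_one hu2 hut0 hus (Ne.symm hst0)
    have hcu_s : G.E.count (u, s) = 1 := out2_count_one hu2 hus hut0 hst0
    have heu : e.1 ≠ u := by
      intro h
      have h1 : (u, e.2) ∈ G.E := by rw [← h]; exact hmem
      rcases out2_classify hu2 hut0 hus (Ne.symm hst0) h1 with h2 | h2
      · rw [show e = (u, L.headD a) from Prod.ext_iff.2 ⟨h, h2⟩] at hcnt; omega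
      · rw [show e = (u, s) from Prod.ext_iff.2 ⟨h, h2⟩] at hcnt; omega
    have hea : e.2 ≠ a := by
      intro h
      have h2 : G.E.count e ≤ G.inDeg a := by rw [← h]; exact count_le_inDeg G e.1 e.2
      omega
    have heL : ∀ v ∈ L, e.2 ≠ v := by
      intro v hv h
      obtain ⟨hiv, hov⟩ := hL v hv
      obtain ⟨pv, hpv, hcase⟩ := chain'_pred_strong hch v hv
      have hcpv : G.E.count (pv, v) ≤ 1 := by
        rcases hcase with hpvL | ⟨rfl, ht0⟩
        · have h3 := count_le_outDeg G pv v
          rw [(hL pv hpvL).2] at h3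
          exact h3
        · rw [ht0] at hcu_t0
          exact le_of_eq hcu_t0
      by_cases hepv : e = (pv, v)
      · rw [hepv] at hcnt; omega
      · have h3 := ms_count_add_count_le hepv (G.E.filter (fun f => f.2 = v))
        have h4 : Multiset.card (G.E.filter (fun f => f.2 = v)) = 2 := hiv
        have h5 : 0 < (G.E.filter (fun f => f.2 = v)).count (pv, v) :=
          Multiset.count_pos.2 (Multiset.mem_filter.2 ⟨hpv, rfl⟩)
        have h6 : (G.E.filter (fun f => f.2 = v)).count e = G.E.count e :=
          Multiset.count_filter_of_pos h
        omega
    have heLo : ∀ v ∈ L, e.1 ≠ v := by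
      intro v hv h
      have h2 : G.E.count e ≤ G.outDeg v := by rw [← h]; exact count_le_outDeg G e.1 e.2
      rw [(hL v hv).2] at h2; omega
    have heao : e.1 ≠ a := by
      intro h
      have h2 : G.E.count e ≤ G.outDeg a := by rw [← h]; exact count_le_outDeg G e.1 e.2
      rw [hoa] at h2; omega
    refine ⟨?_, ?_, ?_, ?_, ?_, ?_, s, ?_, hGPs⟩
    · intro f hf
      rw [hE] at hf
      exact hi0 f (Multiset.mem_of_mem_erase hf)
    · have h1 : G'.inDeg a = G.inDeg a := by unfold inDeg; rw [hE]; exact erase_inDeg hea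
      rw [h1]; exact hia
    · have h1 : G'.outDeg a = G.outDeg a := by unfold outDeg; rw [hE]; exact erase_outDeg heao
      rw [h1]; exact hoa
    · intro v hv
      constructor
      · have h1 : G'.inDeg v = G.inDeg v := by
          unfold inDeg; rw [hE]; exact erase_inDeg (heL v hv)
        rw [h1]; exact (hL v hv).1
      · have h1 : G'.outDeg v = G.outDeg v := by
          unfold outDeg; rw [hE]; exact erase_outDeg (heLo v hv)
        rw [h1]; exact (hL v hv).2
    · refine chain'_imp_tail (fun x hx y hy hxy => ?_) hch
      rw [hE]
      refine erase_mem hxy (fun h => ?_)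
      simp only [List.tail_cons] at hy
      rcases List.mem_append.1 hy with hyL | hya
      · exact heL y hyL (congrArg Prod.snd h).symm
      · have h1 : y = a := by simpa using hya
        exact hea (by rw [← h1]; exact (congrArg Prod.snd h).symm)
    · have h1 : G'.outDeg u = G.outDeg u := by
        unfold outDeg; rw [hE]; exact erase_outDeg heu
      rw [h1]; exact hu2
    · rw [hE]
      exact erase_mem hus (fun h => heu (congrArg Prod.fst h).symm)

lemma theta_card {N : PhyloNet α} {G G' : Digraph' α} (hstep : SimpStep G G')
    (hi0 : ∀ e ∈ G.E, e.1 ≠ e.2 ∧ e.1 ∈ N.G.V ∧ e.2 ∈ N.G.V ∧ N.G.Reaches e.1 e.2) :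
    Multiset.card G'.E < Multiset.card G.E := by
  rcases hstep with ⟨w, hin, hout, p, c, hpw, hwc, hV, hE⟩ | ⟨e, hcnt, hV, hE⟩
  · exact suppress_card hpw hwc (hi0 _ hpw).1 hE
  · have hmem : e ∈ G.E := Multiset.count_pos.1 (by omega)
    rw [hE, Multiset.card_erase_of_mem hmem]
    refine Nat.pred_lt (fun h0 => ?_)
    rw [Multiset.card_eq_zero] at h0
    rw [h0] at hmem
    simp at hmem

lemma exists_fullsimp {N : PhyloNet α} {a u : α} {L : List α} {GP : α → Prop}
    (hGPd : ∀ x y, GP x → N.G.Reaches x y → GP y)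
    (hGPt : ∀ x, GP x → ¬ N.G.Reaches x (L.headD a)) :
    ∀ (n : ℕ) (G : Digraph' α), ThetaInv N a u L GP G → Multiset.card G.E ≤ n →
      ∃ H, FullSimp G H ∧ ThetaInv N a u L GP H := by
  intro n
  induction n with
  | zero =>
    intro G hθ hcard
    by_cases hterm : ∀ G'', ¬ SimpStep G G''
    · exact ⟨G, ⟨Relation.ReflTransGen.refl, hterm⟩, hθ⟩
    · push_neg at hterm
      obtain ⟨G', hstep⟩ := hterm
      have := theta_card (N := N) hstep hθ.1
      omega
  | succ n ih =>
    intro G hθ hcard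
    by_cases hterm : ∀ G'', ¬ SimpStep G G''
    · exact ⟨G, ⟨Relation.ReflTransGen.refl, hterm⟩, hθ⟩
    · push_neg at hterm
      obtain ⟨G', hstep⟩ := hterm
      have hlt := theta_card (N := N) hstep hθ.1
      obtain ⟨H, ⟨hrtg, hterm'⟩, hθH⟩ := ih G' (theta_step hGPd hGPt hstep hθ) (by omega)
      exact ⟨H, ⟨Relation.ReflTransGen.head hstep hrtg, hterm'⟩, hθH⟩

/-! ### The core no-cherry argument -/

lemma pn_noParallel (N : PhyloNet α) (e : α × α) : N.G.E.count e ≤ 1 := by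
  have h := N.noParallel e
  have key : ∀ (i1 i2 : DecidableEq (α × α)),
      @Multiset.count _ i1 e N.G.E = @Multiset.count _ i2 e N.G.E :=
    fun i1 i2 => by rw [Subsingleton.elim i1 i2]
  exact le_trans (le_of_eq (key _ _)) h

private lemma two_inarcs {G : Digraph' α} {v : α} (h2 : G.inDeg v = 2)
    (hnopar : ∀ e : α × α, G.E.count e ≤ 1) {pv : α} (hpv : (pv, v) ∈ G.E) :
    ∃ m, (m, v) ∈ G.E ∧ m ≠ pv := by
  obtain ⟨e1, e2, hee⟩ := Multiset.card_eq_two.1 h2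
  have h1 : e1 ∈ G.E.filter (fun f => f.2 = v) := by rw [hee]; simp
  have h2' : e2 ∈ G.E.filter (fun f => f.2 = v) := by rw [hee]; simp
  have hm1 := Multiset.mem_filter.1 h1
  have hm2 := Multiset.mem_filter.1 h2'
  have hne : e1 ≠ e2 := by
    intro h
    have hc : (G.E.filter (fun f => f.2 = v)).count e1 = 2 := by
      rw [hee, ← h]
      simp [Multiset.insert_eq_cons, Multiset.count_cons, Multiset.count_singleton]
    have hc2 : G.E.count e1 ≤ 1 := hnopar e1
    have hc3 : (G.E.filter (fun f => f.2 = v)).count e1 ≤ G.E.count e1 := by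
      rw [Multiset.count_filter]
      split_ifs <;> omega
    omega
  have hpvf : (pv, v) ∈ G.E.filter (fun f => f.2 = v) := Multiset.mem_filter.2 ⟨hpv, rfl⟩
  rw [hee] at hpvf
  rcases Multiset.mem_cons.1 hpvf with h | h
  · refine ⟨e2.1, ?_, ?_⟩
    · rw [show (e2.1, v) = e2 from Prod.ext_iff.2 ⟨rfl, hm2.2.symm⟩]
      exact hm2.1
    · intro hm
      have he2 : e2 = (pv, v) := Prod.ext_iff.2 ⟨hm, hm2.2⟩
      rw [h] at he2
      exact hne he2.symm
  · have h' : (pv, v) = e2 := by simpa using h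
    refine ⟨e1.1, ?_, ?_⟩
    · rw [show (e1.1, v) = e1 from Prod.ext_iff.2 ⟨rfl, hm1.2.symm⟩]
      exact hm1.1
    · intro hm
      have he1 : e1 = (pv, v) := Prod.ext_iff.2 ⟨hm, hm1.2⟩
      rw [h'] at he1
      exact hne he1

private lemma chain_lift_aux {G : Digraph' α} {r xt : α} {A : Finset α} (hxA : xt ∈ A)
    (hwf : ∀ e ∈ G.E, e.1 ∈ G.V ∧ e.2 ∈ G.V) :
    ∀ (l : List α), List.Chain' (fun x y => (x, y) ∈ G.E) l →
      (∀ z ∈ l, G.Reaches z xt) →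
      (∀ h0, l.head? = some h0 → G.Reaches r h0) →
      List.Chain' (fun x y => (x, y) ∈ (G.pathGraph r A).E) l
  | [], _, _, _ => List.isChain_nil
  | [x], _, _, _ => List.isChain_singleton x
  | x :: y :: t, hch, hz, hh => by
    simp only [List.Chain', List.isChain_cons_cons] at hch ⊢
    have harc := hch.1
    have hrx : G.Reaches r x := hh x rfl
    refine ⟨mem_pathGraph_arc hrx harc (hz y (by simp)) hxA, ?_⟩
    refine chain_lift_aux hxA hwf (y :: t) hch.2
      (fun z hzm => hz z (List.mem_cons_of_mem _ hzm)) (fun h0 hh0 => ?_)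
    have hy : h0 = y := by simpa using hh0.symm
    rw [hy]
    exact hrx.trans (reaches_arc harc (hwf _ harc).1 (hwf _ harc).2)

lemma core (N : PhyloNet α) (hX : 3 ≤ N.X.card) (a b u : α) (L : List α) (s₀ : α)
    (GP : α → Prop)
    (haX : a ∈ N.X) (hbX : b ∈ N.X) (hab : a ≠ b)
    (hchainN : List.Chain' (fun x y => (x, y) ∈ N.G.E) (u :: (L ++ [a])))
    (hLdeg : ∀ v ∈ L, N.G.inDeg v = 2 ∧ N.G.outDeg v = 1)
    (hu2 : N.G.outDeg u = 2)
    (hus : (u, s₀) ∈ N.G.E) (hGP0 : GP s₀)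
    (hGPd : ∀ x y, GP x → N.G.Reaches x y → GP y)
    (hGPt : ∀ x, GP x → ¬ N.G.Reaches x (L.headD a))
    (hGPb : L = [] → ∀ x, GP x → x ≠ b)
    (hRHS : ∀ A : Finset α, A ⊆ N.X → A.card = 3 → a ∈ A → b ∈ A →
      ∀ H : Digraph' α, N.Exhibits A H → ∃ p, (p, a) ∈ H.E ∧ (p, b) ∈ H.E) : False := by
  classical
  obtain ⟨hr0, hr2, hleaves, hleafcl, hint⟩ := pn_nondegen N hX
  obtain ⟨haV, hiaN, hoaN⟩ := hleaves a haX
  obtain ⟨hbV, hibN, hobN⟩ := hleaves b hbX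
  have hwf := N.wf
  have hacy := N.acyclic
  have hut0N : (u, L.headD a) ∈ N.G.E := chain'_head_arc hchainN (head?_append_single L a)
  have huV : u ∈ N.G.V := (hwf _ hut0N).1
  have ht0V : (L.headD a) ∈ N.G.V := (hwf _ hut0N).2
  have hs0V : s₀ ∈ N.G.V := (hwf _ hus).2
  have hst0 : s₀ ≠ L.headD a := fun h => hGPt s₀ hGP0 (by rw [h]; exact reaches_refl ht0V)
  have hLa_V : ∀ z, (z ∈ L ∨ z = a) → z ∈ N.G.V := by
    intro z hz
    rcases hz with hz | rfl
    · obtain ⟨y, hy, _⟩ := chain'_succ (l := u :: L) (t := a) hchainN z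
        (List.mem_cons_of_mem _ hz)
      exact (hwf _ hy).1
    · exact haV
  -- reachability from the chain stays in the chain
  have hclosed_aux : ∀ p : List α, N.G.IsPath p → ∀ h0, p.head? = some h0 →
      (h0 ∈ L ∨ h0 = a) → ∀ z ∈ p, z ∈ L ∨ z = a := by
    intro p
    induction p with
    | nil => intro h; exact absurd rfl h.1
    | cons x t ih =>
      intro hp h0 hh hmem z hz
      have hx : h0 = x := by simpa using hh.symm
      subst hx
      rcases List.mem_cons.1 hz with rfl | hz
      · exact hmem
      · cases t with
        | nil => simp at hz
        | cons y t' =>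
          have harc : (h0, y) ∈ N.G.E := (List.isChain_cons_cons.1 hp.2.2).1
          have hynext : y ∈ L ∨ y = a := by
            rcases hmem with hL' | rfl
            · obtain ⟨y', hy', hy'mem⟩ := chain'_succ (l := L) (t := a)
                (List.IsChain.tail hchainN) h0 hL'
              have hyy : y = y' := outDeg_unique (hLdeg h0 hL').2 harc hy'
              rw [hyy]; exact hy'mem
            · exact absurd harc (fun h => no_out_arc hoaN h)
          exact ih ⟨by simp, fun w hw => hp.2.1 w (List.mem_cons_of_mem _ hw), hp.2.2.tail⟩
            y rfl hynext z hz
  have hclosed : ∀ x y, (x ∈ L ∨ x = a) → N.G.Reaches x y → (y ∈ L ∨ y = a) := by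
    rintro x y hx ⟨p, hp⟩
    exact hclosed_aux p hp.1 x hp.2.1 hx y
      (List.mem_of_mem_getLast? (by rw [hp.2.2]; rfl))
  have hbnot : (b ∈ L ∨ b = a) → False := by
    rintro (hbL | hba)
    · have h1 := (hLdeg b hbL).2
      rw [hobN] at h1; omega
    · exact hab hba.symm
  -- choose the leaf l reachable from s₀, and the third leaf
  obtain ⟨l, hlX, hsl⟩ := reach_leaf N.G hacy N.X hwf hleafcl s₀ hs0V
  have hthird : ∃ c ∈ N.X, c ≠ a ∧ c ≠ b := by
    have h1 : 1 ≤ ((N.X.erase a).erase b).card := by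
      rw [Finset.card_erase_of_mem (Finset.mem_erase.2 ⟨hab.symm, hbX⟩),
        Finset.card_erase_of_mem haX]
      omega
    obtain ⟨c, hc⟩ := Finset.card_pos.1 h1
    obtain ⟨hcb, hc2⟩ := Finset.mem_erase.1 hc
    obtain ⟨hca, hcX⟩ := Finset.mem_erase.1 hc2
    exact ⟨c, hcX, hca, hcb⟩
  obtain ⟨d, hdX, hda, hdb⟩ := hthird
  set c := if l = a ∨ l = b then d else l with hc_def
  have hcX : c ∈ N.X := by rw [hc_def]; split_ifs; exacts [hdX, hlX]
  have hca : c ≠ a := by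
    rw [hc_def]; split_ifs with h
    · exact hda
    · exact fun he => h (Or.inl he)
  have hcb : c ≠ b := by
    rw [hc_def]; split_ifs with h
    · exact hdb
    · exact fun he => h (Or.inr he)
  set A : Finset α := insert a (insert b {c}) with hA_def
  have haA : a ∈ A := by simp [hA_def]
  have hbA : b ∈ A := by simp [hA_def]
  have hcA : c ∈ A := by simp [hA_def]
  have hlA : l ∈ A := by
    by_cases h : l = a ∨ l = b
    · rcases h with rfl | rfl
      · exact haA
      · exact hbA
    · have hcl : c = l := by rw [hc_def, if_neg h]
      rw [← hcl]; exact hcA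
  have hAX : A ⊆ N.X := by
    intro x hx
    simp only [hA_def, Finset.mem_insert, Finset.mem_singleton] at hx
    rcases hx with rfl | rfl | rfl <;> assumption
  have hA3 : A.card = 3 := by
    have h1 : a ∉ insert b ({c} : Finset α) := by simp [hab, Ne.symm hca]
    have h2 : b ∉ ({c} : Finset α) := by simp [Ne.symm hcb]
    rw [hA_def, Finset.card_insert_of_notMem h1, Finset.card_insert_of_notMem h2,
      Finset.card_singleton]
  -- the lowest stable ancestor
  obtain ⟨r, hlsa⟩ := exists_lsa N.G hacy N.root N.root_mem A
  have hSA := hlsa.1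
  have hrnot : (r ∈ L ∨ r = a) → False := by
    intro hr
    obtain ⟨p, hp⟩ := N.reach b hbV
    have hrb : N.G.Reaches r b := reaches_last_of_mem hp.1 hp.2.2 (hSA b hbA p hp)
    exact hbnot (hclosed r b hr hrb)
  -- the chain is a walk
  have hchV : ∀ z ∈ (u :: (L ++ [a])), z ∈ N.G.V := by
    intro z hz
    rcases List.mem_cons.1 hz with rfl | hz
    · exact huV
    · rcases List.mem_append.1 hz with hz | hz
      · exact hLa_V z (Or.inl hz)
      · exact hLa_V z (Or.inr (by simpa using hz))
  have hchainPath : N.G.PathFrom u a (u :: (L ++ [a])) := by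
    refine ⟨⟨by simp, hchV, hchainN⟩, rfl, ?_⟩
    rw [show u :: (L ++ [a]) = (u :: L) ++ [a] from rfl,
      List.getLast?_append_of_ne_nil _ (by simp)]
    simp
  have hreach_a : ∀ z, (z ∈ L ∨ z = a) → N.G.Reaches z a := by
    intro z hz
    rcases hz with hz | rfl
    · obtain ⟨q, hq0, hqh, hql, hqC, hqm⟩ := chain'_suffix (l := L) (t := a)
        (List.IsChain.tail hchainN) hz
      exact ⟨q, ⟨hq0, fun w hw => hLa_V w (hqm w hw), hqC⟩, hqh, hql⟩
    · exact reaches_refl haV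
  have hru : N.G.Reaches r u := by
    obtain ⟨W1, hW1⟩ := N.reach u huV
    have hW : N.G.PathFrom N.root a (W1 ++ (u :: (L ++ [a])).tail) :=
      pathFrom_append hW1 hchainPath
    have hrW := hSA a haA _ hW
    rcases List.mem_append.1 hrW with h | h
    · exact reaches_last_of_mem hW1.1 hW1.2.2 h
    · simp only [List.tail_cons] at h
      rcases List.mem_append.1 h with h | h
      · exact absurd (Or.inl h) hrnot
      · exact absurd (Or.inr (by simpa using h)) hrnot
  set G0 := N.G.pathGraph r A with hG0
  have hchainG0 : List.Chain' (fun x y => (x, y) ∈ G0.E) (u :: (L ++ [a])) := by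
    refine chain_lift_aux haA hwf _ hchainN ?_ ?_
    · intro z hz
      rcases List.mem_cons.1 hz with rfl | hz
      · exact ⟨_, hchainPath⟩
      · rcases List.mem_append.1 hz with hz | hz
        · exact hreach_a z (Or.inl hz)
        · exact hreach_a z (Or.inr (by simpa using hz))
    · intro h0 hh0
      have : h0 = u := by simpa using hh0.symm
      rw [this]; exact hru
  have hG0_subN : ∀ e ∈ G0.E, e ∈ N.G.E := fun e he => mem_of_pathGraph he
  obtain ⟨qa, hqa_eq⟩ : ∃ qa, (u :: L).getLast? = some qa :=
    ⟨(u :: L).getLast (by simp), List.getLast?_eq_getLast_of_ne_nil _⟩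
  have hqaG0 : (qa, a) ∈ G0.E := chain'_last_arc (l := u :: L) (t := a) hchainG0 hqa_eq
  have husG : (u, s₀) ∈ G0.E := mem_pathGraph_arc hru hus hsl hlA
  have hut0G : (u, L.headD a) ∈ G0.E :=
    chain'_head_arc hchainG0 (head?_append_single L a)
  have hθ0 : ThetaInv N a u L GP G0 := by
    refine ⟨?_, ?_, ?_, ?_, hchainG0, ?_, s₀, husG, hGP0⟩
    · intro e he
      have heN := hG0_subN e he
      refine ⟨?_, (hwf _ heN).1, (hwf _ heN).2,
        reaches_arc (show (e.1, e.2) ∈ N.G.E from heN) (hwf _ heN).1 (hwf _ heN).2⟩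
      intro hq
      exact pn_no_self_loop N (x := e.1)
        (by rw [show (e.1, e.1) = e from Prod.ext_iff.2 ⟨rfl, hq⟩]; exact heN)
    · have h1 : G0.inDeg a ≤ N.G.inDeg a := pathGraph_inDeg_le N.G r A a
      have h2 := inDeg_pos hqaG0
      omega
    · have h1 : G0.outDeg a ≤ N.G.outDeg a := pathGraph_outDeg_le N.G r A a
      omega
    · intro v hv
      constructor
      · obtain ⟨pv, hpvG, hcasepv⟩ := chain'_pred_strong hchainG0 v hv
        have hpvN : (pv, v) ∈ N.G.E := hG0_subN _ hpvG
        obtain ⟨m, hmvN, hmne⟩ := two_inarcs ((hLdeg v hv).1) (pn_noParallel N) hpvN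
        have hmV : m ∈ N.G.V := (hwf _ hmvN).1
        obtain ⟨q, hq0, hqh, hql, hqC, hqm⟩ := chain'_suffix (l := L) (t := a)
          (List.IsChain.tail hchainN) hv
        have hqpath : N.G.PathFrom v a q :=
          ⟨⟨hq0, fun w hw => hLa_V w (hqm w hw), hqC⟩, hqh, hql⟩
        obtain ⟨Wm, hWm⟩ := N.reach m hmV
        have hWmv : N.G.PathFrom m a (m :: q) := pathFrom_cons hmvN hmV hqpath
        have hW := pathFrom_append hWm hWmv
        have hrW := hSA a haA _ hW
        have hrm : N.G.Reaches r m := by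
          rcases List.mem_append.1 hrW with h | h
          · exact reaches_last_of_mem hWm.1 hWm.2.2 h
          · simp only [List.tail_cons] at h
            exact absurd (hqm r h) hrnot
        have hmvG : (m, v) ∈ G0.E :=
          mem_pathGraph_arc hrm hmvN (hreach_a v (Or.inl hv)) haA
        have hle : G0.inDeg v ≤ N.G.inDeg v := pathGraph_inDeg_le N.G r A v
        have hge : 2 ≤ G0.inDeg v := ms_two_le_card
          (x := (pv, v)) (y := (m, v)) (fun h => hmne (congrArg Prod.fst h).symm)
          (Multiset.mem_filter.2 ⟨hpvG, rfl⟩) (Multiset.mem_filter.2 ⟨hmvG, rfl⟩)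
        have h2 := (hLdeg v hv).1
        omega
      · obtain ⟨y, hyG, _⟩ := chain'_succ (l := u :: L) (t := a) hchainG0 v
          (List.mem_cons_of_mem _ hv)
        have h1 : G0.outDeg v ≤ N.G.outDeg v := pathGraph_outDeg_le N.G r A v
        have h2 := outDeg_pos hyG
        have h3 := (hLdeg v hv).2
        omega
    · have h1 : G0.outDeg u ≤ N.G.outDeg u := pathGraph_outDeg_le N.G r A u
      have hge : 2 ≤ G0.outDeg u := ms_two_le_card
        (x := (u, L.headD a)) (y := (u, s₀)) (fun h => hst0 (congrArg Prod.snd h).symm)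
        (Multiset.mem_filter.2 ⟨hut0G, rfl⟩) (Multiset.mem_filter.2 ⟨husG, rfl⟩)
      omega
  obtain ⟨H, hFS, hθH⟩ := exists_fullsimp hGPd hGPt (Multiset.card G0.E) G0 hθ0 le_rfl
  obtain ⟨q, hqa, hqb⟩ := hRHS A hAX hA3 haA hbA H ⟨r, hlsa, hFS⟩
  have hθH' : ThetaInv N a u L GP H := hθH
  obtain ⟨hi0H, hiaH, hoaH, hLH, hchH, hu2H, sH, husH, hGPsH⟩ := hθH
  have hqaH : (qa, a) ∈ H.E := chain'_last_arc (l := u :: L) (t := a) hchH hqa_eq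
  have hq_eq : q = qa := inDeg_unique hiaH hqa hqaH
  cases hL_cases : L with
  | nil =>
    have hqau : qa = u := by
      rw [hL_cases] at hqa_eq
      simpa using hqa_eq.symm
    have hubH : (u, b) ∈ H.E := by rw [← hqau, ← hq_eq]; exact hqb
    have huaH : (u, a) ∈ H.E := by
      have h := theta_ut0 hθH'
      rw [hL_cases] at h
      exact h
    have hsne : sH ≠ L.headD a := theta_s_ne hθH' hGPt husH hGPsH
    have hsa : sH ≠ a := by rw [hL_cases] at hsne; exact hsne
    rcases out2_classify hu2H huaH husH (fun h => hsa h.symm) hubH with h | h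
    · exact hab h.symm
    · exact (hGPb hL_cases sH hGPsH) h.symm
  | cons v0 L' =>
    have hqaL : qa ∈ L := by
      rw [hL_cases] at hqa_eq
      rw [List.getLast?_cons_cons] at hqa_eq
      rw [hL_cases]
      exact List.mem_of_mem_getLast? (by rw [hqa_eq]; rfl)
    have hod := (hLH qa hqaL).2
    have hba : a = b := outDeg_unique hod hqaH (by rw [hq_eq] at hqb; exact hqb)
    exact hab hba

/-! ### Climbing through reticulations -/

private lemma two_outarcs {G : Digraph' α} {v : α} (h2 : G.outDeg v = 2)
    (hnopar : ∀ e : α × α, G.E.count e ≤ 1) {s : α} (hs : (v, s) ∈ G.E) :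
    ∃ m, (v, m) ∈ G.E ∧ m ≠ s := by
  obtain ⟨e1, e2, hee⟩ := Multiset.card_eq_two.1 h2
  have h1 : e1 ∈ G.E.filter (fun f => f.1 = v) := by rw [hee]; simp
  have h2' : e2 ∈ G.E.filter (fun f => f.1 = v) := by rw [hee]; simp
  have hm1 := Multiset.mem_filter.1 h1
  have hm2 := Multiset.mem_filter.1 h2'
  have hne : e1 ≠ e2 := by
    intro h
    have hc : (G.E.filter (fun f => f.1 = v)).count e1 = 2 := by
      rw [hee, ← h]
      simp [Multiset.insert_eq_cons, Multiset.count_cons, Multiset.count_singleton]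
    have hc2 : G.E.count e1 ≤ 1 := hnopar e1
    have hc3 : (G.E.filter (fun f => f.1 = v)).count e1 ≤ G.E.count e1 := by
      rw [Multiset.count_filter]
      split_ifs <;> omega
    omega
  have hpvf : (v, s) ∈ G.E.filter (fun f => f.1 = v) := Multiset.mem_filter.2 ⟨hs, rfl⟩
  rw [hee] at hpvf
  rcases Multiset.mem_cons.1 hpvf with h | h
  · refine ⟨e2.2, ?_, ?_⟩
    · rw [show (v, e2.2) = e2 from Prod.ext_iff.2 ⟨hm2.2.symm, rfl⟩]
      exact hm2.1
    · intro hm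
      have he2 : e2 = (v, s) := Prod.ext_iff.2 ⟨hm2.2, hm⟩
      rw [h] at he2
      exact hne he2.symm
  · have h' : (v, s) = e2 := by simpa using h
    refine ⟨e1.2, ?_, ?_⟩
    · rw [show (v, e1.2) = e1 from Prod.ext_iff.2 ⟨hm1.2.symm, rfl⟩]
      exact hm1.1
    · intro hm
      have he1 : e1 = (v, s) := Prod.ext_iff.2 ⟨hm1.2, hm⟩
      rw [h'] at he1
      exact hne he1

lemma pn_class (N : PhyloNet α) (hX : 3 ≤ N.X.card) {p v : α} (hpv : (p, v) ∈ N.G.E) :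
    N.G.outDeg p = 2 ∨ (N.G.inDeg p = 2 ∧ N.G.outDeg p = 1) := by
  obtain ⟨hr0, hr2, hleaves, hleafcl, hint⟩ := pn_nondegen N hX
  have hpV : p ∈ N.G.V := (N.wf _ hpv).1
  by_cases hpr : p = N.root
  · left; rw [hpr]; exact hr2
  · by_cases hpX : p ∈ N.X
    · exact absurd hpv (fun h => no_out_arc (hleaves p hpX).2.2 h)
    · exact (hint p hpV hpr hpX).imp (fun h => h.2) id

lemma pn_other (N : PhyloNet α) {p v : α} (h2 : N.G.outDeg p = 2) (hpv : (p, v) ∈ N.G.E) :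
    ∃ s, (p, s) ∈ N.G.E ∧ s ≠ v := two_outarcs h2 (pn_noParallel N) hpv

lemma pn_parents (N : PhyloNet α) {v : α} (hv2 : N.G.inDeg v = 2) :
    ∃ p1 p2, (p1, v) ∈ N.G.E ∧ (p2, v) ∈ N.G.E ∧ p1 ≠ p2 := by
  have hpos : 0 < Multiset.card (N.G.E.filter (fun f => f.2 = v)) := by
    have h : Multiset.card (N.G.E.filter (fun f => f.2 = v)) = 2 := hv2
    omega
  obtain ⟨e, he⟩ := Multiset.card_pos_iff_exists_mem.1 hpos
  obtain ⟨heE, hev⟩ := Multiset.mem_filter.1 he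
  have he' : (e.1, v) ∈ N.G.E := by
    rw [show (e.1, v) = e from Prod.ext_iff.2 ⟨rfl, hev.symm⟩]; exact heE
  obtain ⟨m, hm, hne⟩ := two_inarcs hv2 (pn_noParallel N) he'
  exact ⟨e.1, m, he', hm, fun h => hne h.symm⟩

lemma climb (N : PhyloNet α) (hX : 3 ≤ N.X.card) :
    ∀ (n : ℕ) (v : α), v ∈ N.G.V → N.G.inDeg v = 2 → N.G.outDeg v = 1 →
      (N.G.V.filter (fun y => ¬ N.G.Reaches v y)).card ≤ n →
      ∃ u s M, List.Chain' (fun x y => (x, y) ∈ N.G.E) (u :: (M ++ [v])) ∧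
        (∀ w ∈ M, N.G.inDeg w = 2 ∧ N.G.outDeg w = 1) ∧
        N.G.outDeg u = 2 ∧ (u, s) ∈ N.G.E ∧ ¬ N.G.Reaches s (M.headD v) := by
  classical
  have hwf := N.wf
  have hacy := N.acyclic
  intro n
  induction n with
  | zero =>
    intro v hvV hv2 hv1 hcard
    obtain ⟨p1, p2, hp1, hp2, hp12⟩ := pn_parents N hv2
    have h1 : p1 ∈ N.G.V.filter (fun y => ¬ N.G.Reaches v y) :=
      Finset.mem_filter.2 ⟨(hwf _ hp1).1, hacy (p1, v) hp1⟩
    have := Finset.card_pos.2 ⟨p1, h1⟩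
    omega
  | succ n ih =>
    intro v hvV hv2 hv1 hcard
    obtain ⟨p1, p2, hp1, hp2, hp12⟩ := pn_parents N hv2
    have hrec : ∀ p, (p, v) ∈ N.G.E → N.G.inDeg p = 2 → N.G.outDeg p = 1 →
        ∃ u s M, List.Chain' (fun x y => (x, y) ∈ N.G.E) (u :: (M ++ [v])) ∧
          (∀ w ∈ M, N.G.inDeg w = 2 ∧ N.G.outDeg w = 1) ∧
          N.G.outDeg u = 2 ∧ (u, s) ∈ N.G.E ∧ ¬ N.G.Reaches s (M.headD v) := by
      intro p hpv hpi hpo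
      have hpV : p ∈ N.G.V := (hwf _ hpv).1
      have hpsub : N.G.V.filter (fun y => ¬ N.G.Reaches p y) ⊆
          N.G.V.filter (fun y => ¬ N.G.Reaches v y) := by
        intro y hy
        obtain ⟨hy1, hy2⟩ := Finset.mem_filter.1 hy
        refine Finset.mem_filter.2 ⟨hy1, fun hvy => hy2 ?_⟩
        exact (reaches_arc hpv hpV hvV).trans hvy
      have hpnm : p ∉ N.G.V.filter (fun y => ¬ N.G.Reaches p y) := by
        intro h
        exact (Finset.mem_filter.1 h).2 (reaches_refl hpV)
      have hpm : p ∈ N.G.V.filter (fun y => ¬ N.G.Reaches v y) :=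
        Finset.mem_filter.2 ⟨hpV, hacy (p, v) hpv⟩
      have hlt : (N.G.V.filter (fun y => ¬ N.G.Reaches p y)).card <
          (N.G.V.filter (fun y => ¬ N.G.Reaches v y)).card := by
        refine Finset.card_lt_card (Finset.ssubset_iff_subset_ne.2 ⟨hpsub, fun heq => ?_⟩)
        rw [heq] at hpnm
        exact hpnm hpm
      obtain ⟨u, s, M, hch, hM, hu2, hus, hguard⟩ := ih p hpV hpi hpo (by omega)
      refine ⟨u, s, M ++ [p], ?_, ?_, hu2, hus, ?_⟩
      · have hlast : (u :: (M ++ [p])).getLast? = some p := by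
          rw [show u :: (M ++ [p]) = (u :: M) ++ [p] from rfl,
            List.getLast?_append_of_ne_nil _ (by simp)]
          simp
        have h := chain'_snoc hch hlast hpv
        simpa using h
      · intro w hw
        rcases List.mem_append.1 hw with hw | hw
        · exact hM w hw
        · have hwp : w = p := by simpa using hw
          rw [hwp]; exact ⟨hpi, hpo⟩
      · rw [headD_append]
        exact hguard
    by_cases hc1 : N.G.outDeg p1 = 2
    · obtain ⟨s1, hs1, hs1v⟩ := pn_other N hc1 hp1
      by_cases hg1 : N.G.Reaches s1 v
      · by_cases hc2 : N.G.outDeg p2 = 2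
        · obtain ⟨s2, hs2, hs2v⟩ := pn_other N hc2 hp2
          have henter : ∀ s, N.G.Reaches s v → s ≠ v →
              N.G.Reaches s p1 ∨ N.G.Reaches s p2 := by
            intro s hsv hne
            obtain ⟨pth, hpth⟩ := hsv
            obtain ⟨y, hy, hsy⟩ := exists_last_arc hpth hne
            rcases in2_classify hv2 hp1 hp2 hp12 hy with rfl | rfl
            · exact Or.inl hsy
            · exact Or.inr hsy
          have hg2 : ¬ N.G.Reaches s2 v := by
            intro hg2
            have h1 : N.G.Reaches s1 p2 := by
              rcases henter s1 hg1 hs1v with h | h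
              · exact absurd h (hacy (p1, s1) hs1)
              · exact h
            have h2 : N.G.Reaches s2 p1 := by
              rcases henter s2 hg2 hs2v with h | h
              · exact h
              · exact absurd h (hacy (p2, s2) hs2)
            have h3 : N.G.Reaches s1 p1 :=
              (h1.trans (reaches_arc hs2 (hwf _ hs2).1 (hwf _ hs2).2)).trans h2
            exact hacy (p1, s1) hs1 h3
          exact ⟨p2, s2, [], List.isChain_pair.2 hp2, by simp, hc2, hs2, hg2⟩
        · rcases pn_class N hX hp2 with h | ⟨hpi, hpo⟩
          · exact absurd h hc2
          · exact hrec p2 hp2 hpi hpo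
      · exact ⟨p1, s1, [], List.isChain_pair.2 hp1, by simp, hc1, hs1, hg1⟩
    · rcases pn_class N hX hp1 with h | ⟨hpi, hpo⟩
      · exact absurd h hc1
      · exact hrec p1 hp1 hpi hpo

/-! ### The backward direction -/

lemma backward_dir (N : PhyloNet α) (hX : 3 ≤ N.X.card)
    {a b : α} (haX : a ∈ N.X) (hbX : b ∈ N.X) (hab : a ≠ b)
    (hRHS : ∀ A : Finset α, A ⊆ N.X → A.card = 3 → a ∈ A → b ∈ A →
      ∀ H : Digraph' α, N.Exhibits A H → ∃ p, (p, a) ∈ H.E ∧ (p, b) ∈ H.E) :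
    N.Cherry a b := by
  classical
  by_contra hnc
  obtain ⟨hr0, hr2, hleaves, hleafcl, hint⟩ := pn_nondegen N hX
  have hwf := N.wf
  have hacy := N.acyclic
  obtain ⟨haV, hiaN, hoaN⟩ := hleaves a haX
  obtain ⟨hbV, hibN, hobN⟩ := hleaves b hbX
  have hpar : ∀ x, N.G.inDeg x = 1 → ∃ p, (p, x) ∈ N.G.E := by
    intro x h1
    have hpos : 0 < Multiset.card (N.G.E.filter (fun f => f.2 = x)) := by
      have h2 : Multiset.card (N.G.E.filter (fun f => f.2 = x)) = 1 := h1
      omega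
    obtain ⟨e, he⟩ := Multiset.card_pos_iff_exists_mem.1 hpos
    obtain ⟨heE, hev⟩ := Multiset.mem_filter.1 he
    exact ⟨e.1, by rw [show (e.1, x) = e from Prod.ext_iff.2 ⟨rfl, hev.symm⟩]; exact heE⟩
  obtain ⟨pa, hpa⟩ := hpar a hiaN
  obtain ⟨pb, hpb⟩ := hpar b hibN
  have hpaV : pa ∈ N.G.V := (hwf _ hpa).1
  have hpbV : pb ∈ N.G.V := (hwf _ hpb).1
  have hRHS' : ∀ A : Finset α, A ⊆ N.X → A.card = 3 → b ∈ A → a ∈ A →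
      ∀ H : Digraph' α, N.Exhibits A H → ∃ p, (p, b) ∈ H.E ∧ (p, a) ∈ H.E := by
    intro A hA h3 hbA' haA' H hEx
    obtain ⟨p, h1, h2⟩ := hRHS A hA h3 haA' hbA' H hEx
    exact ⟨p, h2, h1⟩
  have hretcase : ∀ x y px, x ∈ N.X → y ∈ N.X → x ≠ y → (px, x) ∈ N.G.E →
      N.G.inDeg px = 2 → N.G.outDeg px = 1 →
      (∀ A : Finset α, A ⊆ N.X → A.card = 3 → x ∈ A → y ∈ A →
        ∀ H : Digraph' α, N.Exhibits A H → ∃ p, (p, x) ∈ H.E ∧ (p, y) ∈ H.E) → False := by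
    intro x y px hxX hyX hxy hpx hpi hpo hRHSxy
    have hpxV : px ∈ N.G.V := (hwf _ hpx).1
    obtain ⟨u, s, M, hch, hM, hu2, hus, hguard⟩ := climb N hX _ px hpxV hpi hpo le_rfl
    refine core N hX x y u (M ++ [px]) s
      (fun z => ¬ N.G.Reaches z ((M ++ [px]).headD x))
      hxX hyX hxy ?_ ?_ hu2 hus ?_ ?_ (fun z hz => hz) ?_ hRHSxy
    · have hlast : (u :: (M ++ [px])).getLast? = some px := by
        rw [show u :: (M ++ [px]) = (u :: M) ++ [px] from rfl,
          List.getLast?_append_of_ne_nil _ (by simp)]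
        simp
      have h := chain'_snoc hch hlast hpx
      simpa using h
    · intro w hw
      rcases List.mem_append.1 hw with hw | hw
      · exact hM w hw
      · have hwp : w = px := by simpa using hw
        rw [hwp]; exact ⟨hpi, hpo⟩
    · rw [headD_append]
      exact hguard
    · intro z y' hz hr hy't
      exact hz (hr.trans hy't)
    · intro h
      exact absurd h (by simp)
  rcases pn_class N hX hpa with hpa2 | ⟨hpai, hpao⟩
  · -- pa is a tree vertex
    obtain ⟨z, hz, hzne⟩ := pn_other N hpa2 hpa
    have hza : ¬ N.G.Reaches z a := by
      intro h
      obtain ⟨pth, hpth⟩ := h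
      obtain ⟨y, hy, hzy⟩ := exists_last_arc hpth hzne
      have hy' : y = pa := inDeg_unique hiaN hy hpa
      rw [hy'] at hzy
      exact hacy (pa, z) hz hzy
    by_cases hzb : N.G.Reaches z b
    · have hznb : z ≠ b := by
        intro h
        exact hnc ⟨haX, hbX, hab, pa, hpa, by rw [← h]; exact hz⟩
      have hpapb : N.G.Reaches pa pb := by
        obtain ⟨pth, hpth⟩ := hzb
        obtain ⟨y, hy, hzy⟩ := exists_last_arc hpth hznb
        have hy' : y = pb := inDeg_unique hibN hy hpb
        exact (reaches_arc hz hpaV (hwf _ hz).2).trans (by rw [← hy']; exact hzy)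
      rcases pn_class N hX hpb with hpb2 | ⟨hpbi, hpbo⟩
      · obtain ⟨z', hz', hz'ne⟩ := pn_other N hpb2 hpb
        have hz'b : ¬ N.G.Reaches z' b := by
          intro h
          obtain ⟨pth, hpth⟩ := h
          obtain ⟨y, hy, hzy⟩ := exists_last_arc hpth hz'ne
          have hy' : y = pb := inDeg_unique hibN hy hpb
          rw [hy'] at hzy
          exact hacy (pb, z') hz' hzy
        have hz'a : ¬ N.G.Reaches z' a := by
          intro h
          have hz'na : z' ≠ a := by
            intro he
            have hpp : pb = pa := inDeg_unique hiaN (by rw [← he]; exact hz') hpa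
            exact hnc ⟨haX, hbX, hab, pa, hpa, by rw [← hpp]; exact hpb⟩
          obtain ⟨pth, hpth⟩ := h
          obtain ⟨y, hy, hz'y⟩ := exists_last_arc hpth hz'na
          have hy' : y = pa := inDeg_unique hiaN hy hpa
          have hpbpa : N.G.Reaches pb pa :=
            (reaches_arc hz' hpbV (hwf _ hz').2).trans (by rw [← hy']; exact hz'y)
          have hpp : pa = pb := reaches_antisymm hacy hpapb hpbpa
          exact hnc ⟨haX, hbX, hab, pa, hpa, by rw [hpp]; exact hpb⟩
        refine core N hX b a pb [] z'
          (fun w => ¬ N.G.Reaches w b ∧ ¬ N.G.Reaches w a)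
          hbX haX hab.symm (List.isChain_pair.2 hpb) (by simp) hpb2 hz' ⟨hz'b, hz'a⟩
          (fun w y hw hr => ⟨fun h => hw.1 (hr.trans h), fun h => hw.2 (hr.trans h)⟩)
          (fun w hw => hw.1)
          (fun _ w hw h => hw.2 (by rw [h]; exact reaches_refl haV))
          hRHS'
      · exact hretcase b a pb hbX haX hab.symm hpb hpbi hpbo hRHS'
    · exact core N hX a b pa [] z
        (fun w => ¬ N.G.Reaches w a ∧ ¬ N.G.Reaches w b)
        haX hbX hab (List.isChain_pair.2 hpa) (by simp) hpa2 hz ⟨hza, hzb⟩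
        (fun w y hw hr => ⟨fun h => hw.1 (hr.trans h), fun h => hw.2 (hr.trans h)⟩)
        (fun w hw => hw.1)
        (fun _ w hw h => hw.2 (by rw [h]; exact reaches_refl hbV))
        hRHS
  · exact hretcase a b pa haX hbX hab hpa hpai hpao hRHS

end Digraph'

/-- `{a, b}` is a cherry of `N` iff `{a, b}` is a cherry of
every exhibited trinet `N_A` with `a, b ∈ A`. -/
theorem cherry_iff_cherry_trinets
    {α : Type*} [DecidableEq α] (N : PhyloNet α) (hX : 3 ≤ N.X.card)
    (a b : α) (ha : a ∈ N.X) (hb : b ∈ N.X) (hab : a ≠ b) :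
    N.Cherry a b ↔
      ∀ A : Finset α, A ⊆ N.X → A.card = 3 → a ∈ A → b ∈ A →
        ∀ H : Digraph' α, N.Exhibits A H →
          ∃ p, (p, a) ∈ H.E ∧ (p, b) ∈ H.E := by
  constructor
  · intro hch
    exact Digraph'.forward_dir N hX hab hch
  · intro hRHS
    exact Digraph'.backward_dir N hX ha hb hab hRHS
end
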